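/- arXiv:1011.2234 — 9 statements merged into one kernel-verified Lean document; each statement's English description precedes it below -/
import Mathlib

section
/- The dual point θ̂ = Xβ̂ − y associated with any lasso minimizer β̂ is dual feasible: |x_j^T θ̂| ≤ λ for every j = 1,…,p. Moreover, if λ_max = max_j |x_j^T y| > 0 and 0 < λ ≤ λ_max, the scaled point θ_0 = −(λ/λ_max)·y is also dual feasible: |x_j^T θ_0| ≤ λ for every j. -/
open Finset

/-- The lasso objective `(1/2)‖y − Xβ‖₂² + λ‖β‖₁`. -/
noncomputable def lassoObj {N p : ℕ} (X : Matrix (Fin N) (Fin p) ℝ) (y : Fin N → ℝ)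
    (lam : ℝ) (b : Fin p → ℝ) : ℝ :=
  (1 / 2) * ∑ i, (y i - X.mulVec b i) ^ 2 + lam * ∑ j, |b j|

/-- The dual point `θ̂ = Xβ̂ − y` of a lasso minimizer `β̂` is dual feasible, and if
`λ_max = max_j |x_j^T y| > 0` and `0 < λ ≤ λ_max`, the point `θ₀ = −(λ/λ_max)·y`
is also dual feasible. -/
theorem lasso_dual_feasible {N p : ℕ} (X : Matrix (Fin N) (Fin p) ℝ) (y : Fin N → ℝ)
    (lam lmax : ℝ) (hlam : 0 < lam)
    (hlmax : IsGreatest (Set.range fun j : Fin p => |∑ i, X i j * y i|) lmax)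
    (bhat : Fin p → ℝ)
    (hmin : ∀ b : Fin p → ℝ, lassoObj X y lam bhat ≤ lassoObj X y lam b) :
    (∀ j : Fin p, |∑ i, X i j * (X.mulVec bhat i - y i)| ≤ lam) ∧
      (0 < lmax → lam ≤ lmax →
        ∀ j : Fin p, |∑ i, X i j * (-(lam / lmax) * y i)| ≤ lam) := by
  constructor
  · intro j
    set g : ℝ := ∑ i, X i j * (X.mulVec bhat i - y i) with hg
    set a : ℝ := ∑ i, (X i j) ^ 2 with ha
    have ha0 : 0 ≤ a := Finset.sum_nonneg fun i _ => sq_nonneg _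
    -- key inequality from minimality
    have key : ∀ t : ℝ, 0 ≤ t * g + t ^ 2 * a / 2 + lam * |t| := by
      intro t
      set b : Fin p → ℝ := fun k => bhat k + if k = j then t else 0 with hb
      have hmv : ∀ i, X.mulVec b i = X.mulVec bhat i + X i j * t := by
        intro i
        simp only [Matrix.mulVec, dotProduct, hb, mul_add, Finset.sum_add_distrib,
          mul_ite, mul_zero, Finset.sum_ite_eq', Finset.mem_univ, if_true]
      have hsq : ∑ i, (y i - X.mulVec b i) ^ 2
          = ∑ i, (y i - X.mulVec bhat i) ^ 2 + 2 * t * g + t ^ 2 * a := by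
        have : ∀ i, (y i - X.mulVec b i) ^ 2
            = (y i - X.mulVec bhat i) ^ 2
              + 2 * t * (X i j * (X.mulVec bhat i - y i)) + t ^ 2 * (X i j) ^ 2 := by
          intro i; rw [hmv i]; ring
        rw [Finset.sum_congr rfl fun i _ => this i]
        simp only [Finset.sum_add_distrib, ← Finset.mul_sum, hg, ha]
      have habs : ∑ k, |b k| ≤ ∑ k, |bhat k| + |t| := by
        have : ∑ k, |b k| ≤ ∑ k, (|bhat k| + if k = j then |t| else 0) := by
          apply Finset.sum_le_sum
          intro k _
          by_cases hk : k = j <;> simp [hb, hk, abs_add_le]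
        calc ∑ k, |b k| ≤ _ := this
          _ = ∑ k, |bhat k| + |t| := by
            simp [Finset.sum_add_distrib, Finset.sum_ite_eq', Finset.mem_univ]
      have h1 := hmin b
      unfold lassoObj at h1
      rw [hsq] at h1
      nlinarith [h1]
    -- conclude |g| ≤ lam
    by_contra hcon
    push_neg at hcon
    set s : ℝ := (|g| - lam) / (a + 1) with hs
    have hs0 : 0 < s := div_pos (by linarith) (by linarith)
    set t : ℝ := -s * (if 0 ≤ g then 1 else -1) with ht
    have htg : t * g = -(s * |g|) := by
      by_cases h0 : 0 ≤ g <;> simp [ht, h0, abs_of_nonneg, abs_of_neg, lt_of_not_ge] <;>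
        rcases le_or_gt 0 g with h | h <;>
        first
          | (rw [abs_of_nonneg h]; ring)
          | (rw [abs_of_neg h]; ring)
    have htabs : |t| = s := by
      by_cases h0 : 0 ≤ g <;> simp [ht, abs_mul, abs_of_pos hs0, h0]
    have htsq : t ^ 2 = s ^ 2 := by
      by_cases h0 : 0 ≤ g <;> simp [ht, h0, mul_pow, neg_pow] <;> ring
    have hk := key t
    rw [htg, htabs, htsq] at hk
    -- s * |g| ≤ s^2 * a / 2 + lam * s, so |g| ≤ s*a/2 + lam
    have h2 : |g| ≤ s * a / 2 + lam := by
      have := hk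
      nlinarith [hs0]
    have h3 : s * a / 2 < |g| - lam := by
      rw [hs]
      rw [div_mul_eq_mul_div, div_div, div_lt_iff₀ (by linarith : (0:ℝ) < (a+1)*2)]
      nlinarith [ha0, hcon]
    linarith
  · intro hl0 hle j
    have hj : |∑ i, X i j * y i| ≤ lmax := hlmax.2 ⟨j, rfl⟩
    have : ∑ i, X i j * (-(lam / lmax) * y i) = -(lam / lmax) * ∑ i, X i j * y i := by
      rw [Finset.mul_sum]; apply Finset.sum_congr rfl; intro i _; ring
    rw [this, abs_mul, abs_neg, abs_of_pos (div_pos hlam hl0)]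
    rw [div_mul_eq_mul_div, div_le_iff₀ hl0]
    nlinarith [abs_nonneg (∑ i, X i j * y i)]
end

section
/- (SAFE rule correctness.) Let λ_max = max_j |x_j^T y| and suppose 0 < λ ≤ λ_max and y ≠ 0. If for some index j we have |x_j^T y| < λ − ‖x_j‖₂ ‖y‖₂ (λ_max − λ)/λ_max, then every minimizer β̂ of the lasso objective L(β) = (1/2)‖y − Xβ‖₂² + λ‖β‖₁ satisfies β̂_j = 0. -/
open Finset

/-- Epsilon-limit helper: if `A ≤ B + ε * C` for all small positive `ε`, then `A ≤ B`. -/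
lemma safe_aux_eps {A B C : ℝ} (hC : 0 ≤ C)
    (h : ∀ ε : ℝ, 0 < ε → ε ≤ 1 → A ≤ B + ε * C) : A ≤ B := by
  by_contra hAB
  push_neg at hAB
  rcases eq_or_lt_of_le hC with hC0 | hCpos
  · have := h 1 one_pos le_rfl
    rw [← hC0] at this
    linarith
  · set ε := min 1 ((A - B) / (2 * C)) with hε
    have hε0 : 0 < ε := lt_min one_pos (div_pos (by linarith) (by linarith))
    have hεle : ε ≤ 1 := min_le_left _ _
    have h2 : ε * C ≤ (A - B) / 2 := by
      have h3 : ε ≤ (A - B) / (2 * C) := min_le_right _ _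
      have h4 := mul_le_mul_of_nonneg_right h3 (le_of_lt hCpos)
      calc ε * C ≤ (A - B) / (2 * C) * C := h4
        _ = (A - B) / 2 := by field_simp
    have := h ε hε0 hεle
    linarith

/-- Cauchy–Schwarz with square roots, real version. -/
lemma safe_aux_cs {n : ℕ} (f g : Fin n → ℝ) :
    |∑ i, f i * g i| ≤ Real.sqrt (∑ i, f i ^ 2) * Real.sqrt (∑ i, g i ^ 2) := by
  have h := sum_mul_sq_le_sq_mul_sq Finset.univ f g
  have := Real.sqrt_le_sqrt h
  rwa [Real.sqrt_sq_eq_abs, Real.sqrt_mul (Finset.sum_nonneg fun i _ => sq_nonneg _)] at this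

/-- Single-coordinate perturbation inequality at a lasso minimizer. -/
lemma safe_aux_pert {N p : ℕ} (X : Matrix (Fin N) (Fin p) ℝ) (y : Fin N → ℝ) (lam : ℝ)
    (bhat : Fin p → ℝ) (hmin : ∀ b, lassoObj X y lam bhat ≤ lassoObj X y lam b)
    (k : Fin p) (d : ℝ) :
    lam * |bhat k| ≤ lam * |bhat k + d|
      - d * (∑ i, X i k * (y i - X.mulVec bhat i)) + d ^ 2 / 2 * ∑ i, X i k ^ 2 := by
  set b' : Fin p → ℝ := Function.update bhat k (bhat k + d) with hb'
  have hmv : ∀ i, X.mulVec b' i = X.mulVec bhat i + d * X i k := by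
    intro i
    simp only [Matrix.mulVec, dotProduct]
    have h1 : ∀ m : Fin p, X i m * b' m
        = X i m * bhat m + (if m = k then d * X i k else 0) := by
      intro m
      by_cases h : m = k
      · subst h; simp [hb', Function.update_self]; ring
      · simp only [hb', Function.update_of_ne h, if_neg h, add_zero]
    rw [Finset.sum_congr rfl fun m _ => h1 m, Finset.sum_add_distrib,
      Finset.sum_ite_eq' Finset.univ k fun _ => d * X i k]
    simp
  have habs : ∑ m, |b' m| = (∑ m, |bhat m|) + (|bhat k + d| - |bhat k|) := by
    have h1 : ∀ m : Fin p, |b' m|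
        = |bhat m| + (if m = k then |bhat k + d| - |bhat k| else 0) := by
      intro m
      by_cases h : m = k
      · subst h; simp [hb', Function.update_self]
      · simp only [hb', Function.update_of_ne h, if_neg h, add_zero]
    rw [Finset.sum_congr rfl fun m _ => h1 m, Finset.sum_add_distrib,
      Finset.sum_ite_eq' Finset.univ k fun _ => |bhat k + d| - |bhat k|]
    simp
  have hsq : ∑ i, (y i - X.mulVec b' i) ^ 2
      = (∑ i, (y i - X.mulVec bhat i) ^ 2)
        - 2 * d * (∑ i, X i k * (y i - X.mulVec bhat i))
        + d ^ 2 * ∑ i, X i k ^ 2 := by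
    have h1 : ∀ i, (y i - X.mulVec b' i) ^ 2
        = (y i - X.mulVec bhat i) ^ 2
          - 2 * d * (X i k * (y i - X.mulVec bhat i)) + d ^ 2 * X i k ^ 2 := by
      intro i; rw [hmv i]; ring
    rw [Finset.sum_congr rfl fun i _ => h1 i, Finset.sum_add_distrib,
      Finset.sum_sub_distrib, ← Finset.mul_sum, ← Finset.mul_sum]
  have h := hmin b'
  simp only [lassoObj, hsq, habs] at h
  linarith

/-- KKT-type identity at a lasso minimizer. -/
lemma safe_aux_kkt {N p : ℕ} (X : Matrix (Fin N) (Fin p) ℝ) (y : Fin N → ℝ) (lam : ℝ)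
    (bhat : Fin p → ℝ) (hmin : ∀ b, lassoObj X y lam bhat ≤ lassoObj X y lam b)
    (k : Fin p) :
    bhat k * (∑ i, X i k * (y i - X.mulVec bhat i)) = lam * |bhat k| := by
  set t := bhat k with ht
  set A := ∑ i, X i k * (y i - X.mulVec bhat i) with hA
  set Q := ∑ i, X i k ^ 2 with hQdef
  have hQ : 0 ≤ Q := Finset.sum_nonneg fun i _ => sq_nonneg _
  have hC : 0 ≤ t ^ 2 * Q / 2 := by positivity
  have le1 : lam * |t| ≤ t * A := by
    apply safe_aux_eps hC
    intro ε hε0 hε1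
    have h := safe_aux_pert X y lam bhat hmin k (-(ε * t))
    rw [show t + -(ε * t) = (1 - ε) * t by ring, abs_mul,
      abs_of_nonneg (by linarith : (0:ℝ) ≤ 1 - ε)] at h
    have h2 : ε * (lam * |t|) ≤ ε * (t * A + ε * (t ^ 2 * Q / 2)) := by nlinarith [h]
    exact (mul_le_mul_iff_right₀ hε0).mp h2
  have le2 : t * A ≤ lam * |t| := by
    apply safe_aux_eps hC
    intro ε hε0 hε1
    have h := safe_aux_pert X y lam bhat hmin k (ε * t)
    rw [show t + ε * t = (1 + ε) * t by ring, abs_mul,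
      abs_of_nonneg (by linarith : (0:ℝ) ≤ 1 + ε)] at h
    have h2 : ε * (t * A) ≤ ε * (lam * |t| + ε * (t ^ 2 * Q / 2)) := by nlinarith [h]
    exact (mul_le_mul_iff_right₀ hε0).mp h2
  exact le_antisymm le2 le1

/-- Exchange of summation: `∑_k b_k ⟨x_k, v⟩ = ⟨Xb, v⟩`. -/
lemma safe_aux_swap {N p : ℕ} (X : Matrix (Fin N) (Fin p) ℝ) (b : Fin p → ℝ)
    (v : Fin N → ℝ) :
    ∑ k, b k * ∑ i, X i k * v i = ∑ i, X.mulVec b i * v i := by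
  simp only [Matrix.mulVec, dotProduct, Finset.sum_mul, Finset.mul_sum]
  rw [Finset.sum_comm]
  exact Finset.sum_congr rfl fun i _ => Finset.sum_congr rfl fun k _ => by ring

/-- SAFE rule correctness: if `|x_j^T y| < λ − ‖x_j‖₂‖y‖₂(λ_max − λ)/λ_max`, then every
lasso minimizer `β̂` has `β̂_j = 0`. -/
theorem safe_rule_correct {N p : ℕ} (X : Matrix (Fin N) (Fin p) ℝ) (y : Fin N → ℝ)
    (lam lmax : ℝ) (hlam : 0 < lam) (hle : lam ≤ lmax) (hy : y ≠ 0)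
    (hlmax : IsGreatest (Set.range fun j : Fin p => |∑ i, X i j * y i|) lmax)
    (j : Fin p)
    (hsafe : |∑ i, X i j * y i| <
      lam - Real.sqrt (∑ i, X i j ^ 2) * Real.sqrt (∑ i, y i ^ 2) * (lmax - lam) / lmax) :
    ∀ bhat : Fin p → ℝ,
      (∀ b : Fin p → ℝ, lassoObj X y lam bhat ≤ lassoObj X y lam b) → bhat j = 0 := by
  intro bhat hmin
  by_contra hj0
  have hlmax0 : 0 < lmax := lt_of_lt_of_le hlam hle
  set mv : Fin N → ℝ := X.mulVec bhat with hmv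
  set θ : Fin N → ℝ := fun i => lam / lmax * y i with hθ
  -- strong duality: lassoObj bhat = ∑ y (y - mv) - (1/2) ∑ (y - mv)²
  have hlam1 : lam * ∑ k, |bhat k| = ∑ i, mv i * (y i - mv i) := by
    rw [Finset.mul_sum, ← safe_aux_swap X bhat (fun i => y i - mv i)]
    exact Finset.sum_congr rfl fun k _ => (safe_aux_kkt X y lam bhat hmin k).symm
  -- weak duality with θ feasible
  have hfeas : ∀ k : Fin p, bhat k * (∑ i, X i k * θ i) ≤ lam * |bhat k| := by
    intro k
    have hc : ∑ i, X i k * θ i = lam / lmax * ∑ i, X i k * y i := by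
      rw [Finset.mul_sum]
      exact Finset.sum_congr rfl fun i _ => by simp only [hθ]; ring
    have hub : |∑ i, X i k * y i| ≤ lmax := hlmax.2 ⟨k, rfl⟩
    have habs : |∑ i, X i k * θ i| ≤ lam := by
      rw [hc, abs_mul, abs_of_nonneg (by positivity : (0:ℝ) ≤ lam / lmax)]
      calc lam / lmax * |∑ i, X i k * y i| ≤ lam / lmax * lmax :=
            mul_le_mul_of_nonneg_left hub (by positivity)
        _ = lam := by field_simp
    calc bhat k * (∑ i, X i k * θ i) ≤ |bhat k * (∑ i, X i k * θ i)| := le_abs_self _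
      _ = |bhat k| * |∑ i, X i k * θ i| := abs_mul _ _
      _ ≤ |bhat k| * lam := mul_le_mul_of_nonneg_left habs (abs_nonneg _)
      _ = lam * |bhat k| := mul_comm _ _
  -- weak duality consequence: ∑ mvθ ≤ ∑ mv(y - mv)
  have hkey1 : ∑ i, mv i * θ i ≤ ∑ i, mv i * (y i - mv i) := by
    calc ∑ i, mv i * θ i = ∑ k, bhat k * ∑ i, X i k * θ i :=
          (safe_aux_swap X bhat θ).symm
      _ ≤ ∑ k, lam * |bhat k| := Finset.sum_le_sum fun k _ => hfeas k
      _ = lam * ∑ k, |bhat k| := (Finset.mul_sum _ _ _).symm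
      _ = ∑ i, mv i * (y i - mv i) := hlam1
  -- distance bound: ∑ mv² ≤ ∑ (θ - y)²
  have hdist : ∑ i, mv i ^ 2 ≤ ∑ i, (θ i - y i) ^ 2 := by
    have hptw : ∀ i, (θ i - y i) ^ 2 - mv i ^ 2
        = 2 * (mv i * (y i - mv i) - mv i * θ i) + (y i - mv i - θ i) ^ 2 :=
      fun i => by ring
    have heq := Finset.sum_congr rfl fun i (_ : i ∈ Finset.univ) => hptw i
    rw [Finset.sum_sub_distrib, Finset.sum_add_distrib, ← Finset.mul_sum,
      Finset.sum_sub_distrib] at heq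
    have hsq : (0:ℝ) ≤ ∑ i, (y i - mv i - θ i) ^ 2 :=
      Finset.sum_nonneg fun i _ => sq_nonneg _
    linarith
  -- compute ∑ (θ - y)²
  have hθy : ∑ i, (θ i - y i) ^ 2 = ((lmax - lam) / lmax) ^ 2 * ∑ i, y i ^ 2 := by
    rw [Finset.mul_sum]
    refine Finset.sum_congr rfl fun i _ => ?_
    simp only [hθ]
    field_simp
    ring
  have hfrac : (0:ℝ) ≤ (lmax - lam) / lmax := div_nonneg (by linarith) (le_of_lt hlmax0)
  have hsig : Real.sqrt (∑ i, mv i ^ 2)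
      ≤ (lmax - lam) / lmax * Real.sqrt (∑ i, y i ^ 2) := by
    have h1 := Real.sqrt_le_sqrt hdist
    rwa [hθy, Real.sqrt_mul (sq_nonneg _), Real.sqrt_sq hfrac] at h1
  -- bound |A_j|
  have hAsplit : (∑ i, X i j * (y i - mv i))
      = (∑ i, X i j * y i) - ∑ i, X i j * mv i := by
    rw [← Finset.sum_sub_distrib]
    exact Finset.sum_congr rfl fun i _ => by ring
  have hcs := safe_aux_cs (fun i => X i j) mv
  have hQ0 : (0:ℝ) ≤ Real.sqrt (∑ i, X i j ^ 2) := Real.sqrt_nonneg _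
  have hAlt : |∑ i, X i j * (y i - mv i)| < lam := by
    have h1 : |∑ i, X i j * (y i - mv i)|
        ≤ |∑ i, X i j * y i| + |∑ i, X i j * mv i| := by
      rw [hAsplit]; exact abs_sub _ _
    have h2 : |∑ i, X i j * mv i|
        ≤ Real.sqrt (∑ i, X i j ^ 2) * ((lmax - lam) / lmax * Real.sqrt (∑ i, y i ^ 2)) :=
      le_trans hcs (mul_le_mul_of_nonneg_left hsig hQ0)
    have h3 : Real.sqrt (∑ i, X i j ^ 2) * ((lmax - lam) / lmax * Real.sqrt (∑ i, y i ^ 2))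
        = Real.sqrt (∑ i, X i j ^ 2) * Real.sqrt (∑ i, y i ^ 2) * (lmax - lam) / lmax := by
      ring
    rw [h3] at h2
    linarith [hsafe]
  -- contradiction with KKT
  have hkkt := safe_aux_kkt X y lam bhat hmin j
  have h1 : lam * |bhat j| ≤ |∑ i, X i j * (y i - mv i)| * |bhat j| := by
    rw [← hkkt]
    calc bhat j * (∑ i, X i j * (y i - mv i))
        ≤ |bhat j * (∑ i, X i j * (y i - mv i))| := le_abs_self _
      _ = |∑ i, X i j * (y i - mv i)| * |bhat j| := by rw [abs_mul]; ring
  have hbj : 0 < |bhat j| := abs_pos.mpr hj0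
  have h2 : lam ≤ |∑ i, X i j * (y i - mv i)| := le_of_mul_le_mul_right h1 hbj
  linarith
end

section
/- Suppose each column of X is standardized so that ‖x_j‖₂ = 1 for all j, and let λ_max = max_j |x_j^T y|. Then λ_max ≤ ‖y‖₂, and consequently for every λ with 0 < λ ≤ λ_max the SAFE threshold is no larger than the strong-rule threshold: λ − ‖y‖₂ (λ_max − λ)/λ_max ≤ 2λ − λ_max. Hence in the standardized case the SAFE discarding rule is always weaker than the basic strong rule. -/
open Finset

/-- For standardized predictors (`‖x_j‖₂ = 1` for all `j`), `λ_max ≤ ‖y‖₂`, and hence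
for every `0 < λ ≤ λ_max` the SAFE threshold is no larger than the strong-rule
threshold: `λ − ‖y‖₂(λ_max − λ)/λ_max ≤ 2λ − λ_max`. -/
theorem safe_threshold_le_strong_threshold {N p : ℕ} (X : Matrix (Fin N) (Fin p) ℝ)
    (y : Fin N → ℝ) (lmax : ℝ)
    (hstd : ∀ j : Fin p, Real.sqrt (∑ i, X i j ^ 2) = 1)
    (hlmax : IsGreatest (Set.range fun j : Fin p => |∑ i, X i j * y i|) lmax) :
    lmax ≤ Real.sqrt (∑ i, y i ^ 2) ∧
      ∀ lam : ℝ, 0 < lam → lam ≤ lmax →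
        lam - Real.sqrt (∑ i, y i ^ 2) * (lmax - lam) / lmax ≤ 2 * lam - lmax := by
  obtain ⟨⟨j, hj⟩, _⟩ := hlmax
  have hy0 : (0:ℝ) ≤ ∑ i, y i ^ 2 := Finset.sum_nonneg fun i _ => sq_nonneg _
  have hcs : (∑ i, X i j * y i) ^ 2 ≤ (∑ i, X i j ^ 2) * (∑ i, y i ^ 2) :=
    Finset.sum_mul_sq_le_sq_mul_sq _ _ _
  have h1 : lmax ≤ Real.sqrt (∑ i, y i ^ 2) := by
    rw [← hj]; simp only []; rw [← Real.sqrt_sq_eq_abs]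
    calc Real.sqrt ((∑ i, X i j * y i) ^ 2)
        ≤ Real.sqrt ((∑ i, X i j ^ 2) * (∑ i, y i ^ 2)) := Real.sqrt_le_sqrt hcs
      _ = Real.sqrt (∑ i, X i j ^ 2) * Real.sqrt (∑ i, y i ^ 2) := Real.sqrt_mul
          (Finset.sum_nonneg fun i _ => sq_nonneg _) _
      _ = Real.sqrt (∑ i, y i ^ 2) := by rw [hstd j, one_mul]
  refine ⟨h1, fun lam hlam hle => ?_⟩
  have hlmax0 : 0 < lmax := lt_of_lt_of_le hlam hle
  have hkey : lmax - lam ≤ Real.sqrt (∑ i, y i ^ 2) * (lmax - lam) / lmax := by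
    rw [le_div_iff₀ hlmax0]
    nlinarith [h1, sub_nonneg.mpr hle]
  linarith
end

section
/- (Soundness of the strong sequential rule under the unit slope condition.) Let β̂ : (0,∞) → ℝ^p be a solution path, i.e., for each μ > 0 the vector β̂(μ) minimizes the lasso objective (1/2)‖y − Xβ‖₂² + μ‖β‖₁, and define c_j(μ) = x_j^T(y − Xβ̂(μ)). Let 0 < λ ≤ λ₀. If the function μ ↦ c_j(μ) is 1-Lipschitz on [λ, λ₀] and |x_j^T(y − Xβ̂(λ₀))| < 2λ − λ₀, then β̂(λ)_j = 0. -/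
open Finset

lemma lasso_kkt_zero {N p : ℕ} (X : Matrix (Fin N) (Fin p) ℝ) (y : Fin N → ℝ)
    (lam : ℝ) (b : Fin p → ℝ)
    (hmin : ∀ b' : Fin p → ℝ, lassoObj X y lam b ≤ lassoObj X y lam b')
    (j : Fin p) (hlt : |∑ i, X i j * (y i - X.mulVec b i)| < lam) :
    b j = 0 := by
  set c : ℝ := ∑ i, X i j * (y i - X.mulVec b i) with hc
  set A : ℝ := ∑ i, (X i j) ^ 2 with hA
  have hA0 : 0 ≤ A := Finset.sum_nonneg fun i _ => sq_nonneg _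
  have key : ∀ s : ℝ, 0 ≤ - s * c + s ^ 2 / 2 * A + lam * (|b j + s| - |b j|) := by
    intro s
    have h := hmin (Function.update b j (b j + s))
    have hmv : ∀ i, X.mulVec (Function.update b j (b j + s)) i
        = X.mulVec b i + s * X i j := by
      intro i
      simp only [Matrix.mulVec, dotProduct]
      have : ∀ k, X i k * Function.update b j (b j + s) k
          = X i k * b k + (if k = j then X i k * s else 0) := by
        intro k
        by_cases hk : k = j <;> simp [hk, Function.update] <;> ring
      simp_rw [this, Finset.sum_add_distrib, Finset.sum_ite_eq' Finset.univ j]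
      simp [mul_comm]
    have habs : ∑ k, |Function.update b j (b j + s) k|
        = ∑ k, |b k| + (|b j + s| - |b j|) := by
      have h1 : (fun k => |Function.update b j (b j + s) k|)
          = Function.update (fun k => |b k|) j (|b j + s|) := by
        funext k
        exact Function.apply_update (fun _ x => |x|) b j (b j + s) k
      rw [show (∑ k, |Function.update b j (b j + s) k|)
          = ∑ k, Function.update (fun k => |b k|) j (|b j + s|) k from by rw [h1]]
      rw [Finset.sum_update_of_mem (Finset.mem_univ j),
        ← Finset.add_sum_erase _ _ (Finset.mem_univ j)]
      simp [Finset.sdiff_singleton_eq_erase]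
      ring
    have hsq : ∑ i, (y i - X.mulVec (Function.update b j (b j + s)) i) ^ 2
        = ∑ i, (y i - X.mulVec b i) ^ 2 - 2 * s * c + s ^ 2 * A := by
      simp_rw [hmv]
      have : ∀ i ∈ Finset.univ, (y i - (X.mulVec b i + s * X i j)) ^ 2
          = (y i - X.mulVec b i) ^ 2 - 2 * s * (X i j * (y i - X.mulVec b i))
            + s ^ 2 * (X i j) ^ 2 := by
        intro i _; ring
      rw [Finset.sum_congr rfl this, Finset.sum_add_distrib, Finset.sum_sub_distrib,
        ← Finset.mul_sum, ← Finset.mul_sum]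
    unfold lassoObj at h
    rw [hsq, habs] at h
    nlinarith [h]
  by_contra hbj
  set sgn : ℝ := if 0 < b j then 1 else -1 with hsgn
  have hsbs : sgn * sgn = 1 := by by_cases h : 0 < b j <;> simp [hsgn, h]
  have hsabs : sgn * |b j| = b j := by
    rcases lt_trichotomy (b j) 0 with h | h | h
    · simp [hsgn, not_lt.mpr h.le, abs_of_neg h]
    · exact absurd h hbj
    · simp [hsgn, h, abs_of_pos h]
  have habsj : 0 < |b j| := abs_pos.mpr hbj
  have hstep : ∀ t : ℝ, 0 < t → t < |b j| → lam ≤ sgn * c + t * A / 2 := by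
    intro t ht htl
    have h := key (- t * sgn)
    have hbs : b j + - t * sgn = sgn * (|b j| - t) := by
      have : sgn * (|b j| - t) = sgn * |b j| - sgn * t := by ring
      rw [this, hsabs]; ring
    have habs2 : |b j + - t * sgn| = |b j| - t := by
      rw [hbs, abs_mul]
      have : |sgn| = 1 := by by_cases h' : 0 < b j <;> simp [hsgn, h']
      rw [this, one_mul, abs_of_pos (by linarith)]
    rw [habs2] at h
    have e : (-t * sgn) ^ 2 = t ^ 2 := by
      rw [show (-t * sgn) ^ 2 = t ^ 2 * (sgn * sgn) from by ring, hsbs, mul_one]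
    rw [e] at h
    have h2 : 0 ≤ t * (sgn * c + t * A / 2 - lam) := by linarith [h]
    have h3 : 0 ≤ sgn * c + t * A / 2 - lam := nonneg_of_mul_nonneg_right h2 ht
    linarith
  have hlam_le : lam ≤ sgn * c := by
    refine le_of_forall_pos_le_add fun ε hε => ?_
    have ht1 : (0:ℝ) < min (|b j| / 2) (ε / (A + 1)) := by
      apply lt_min (by linarith) (div_pos hε (by linarith))
    have ht2 : min (|b j| / 2) (ε / (A + 1)) < |b j| :=
      lt_of_le_of_lt (min_le_left _ _) (by linarith)
    have h := hstep _ ht1 ht2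
    have htA : min (|b j| / 2) (ε / (A + 1)) * A / 2 ≤ ε := by
      have h1 : min (|b j| / 2) (ε / (A + 1)) ≤ ε / (A + 1) := min_le_right _ _
      have h2 : ε / (A + 1) * A ≤ ε := by
        rw [div_mul_eq_mul_div, div_le_iff₀ (by linarith)]
        nlinarith
      nlinarith [mul_le_mul_of_nonneg_right h1 hA0]
    linarith
  have : sgn * c ≤ |c| := by
    calc sgn * c ≤ |sgn * c| := le_abs_self _
    _ = |c| := by rw [abs_mul]; by_cases h' : 0 < b j <;> simp [hsgn, h']
  linarith

/-- Soundness of the strong sequential rule under the unit slope condition: if `β̂(μ)`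
is a lasso solution path, `c_j(μ) = x_j^T(y − Xβ̂(μ))` is 1-Lipschitz on `[λ, λ₀]`, and
`|x_j^T(y − Xβ̂(λ₀))| < 2λ − λ₀`, then `β̂(λ)_j = 0`. -/
theorem strong_sequential_rule_sound {N p : ℕ} (X : Matrix (Fin N) (Fin p) ℝ)
    (y : Fin N → ℝ) (bhat : ℝ → Fin p → ℝ)
    (hpath : ∀ mu : ℝ, 0 < mu →
      ∀ b : Fin p → ℝ, lassoObj X y mu (bhat mu) ≤ lassoObj X y mu b)
    (lam lam0 : ℝ) (hlam : 0 < lam) (hle : lam ≤ lam0) (j : Fin p)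
    (hlip : ∀ a ∈ Set.Icc lam lam0, ∀ b ∈ Set.Icc lam lam0,
      |(∑ i, X i j * (y i - X.mulVec (bhat a) i)) -
        (∑ i, X i j * (y i - X.mulVec (bhat b) i))| ≤ |a - b|)
    (hrule : |∑ i, X i j * (y i - X.mulVec (bhat lam0) i)| < 2 * lam - lam0) :
    bhat lam j = 0 := by
  have hmem1 : lam ∈ Set.Icc lam lam0 := ⟨le_refl _, hle⟩
  have hmem2 : lam0 ∈ Set.Icc lam lam0 := ⟨hle, le_refl _⟩
  have hl := hlip lam hmem1 lam0 hmem2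
  have hclam : |∑ i, X i j * (y i - X.mulVec (bhat lam) i)| < lam := by
    have habs : |lam - lam0| = lam0 - lam := by rw [abs_sub_comm, abs_of_nonneg (by linarith)]
    have htri : |∑ i, X i j * (y i - X.mulVec (bhat lam) i)|
        ≤ |(∑ i, X i j * (y i - X.mulVec (bhat lam) i)) -
            (∑ i, X i j * (y i - X.mulVec (bhat lam0) i))|
          + |∑ i, X i j * (y i - X.mulVec (bhat lam0) i)| := by
      have := abs_add_le ((∑ i, X i j * (y i - X.mulVec (bhat lam) i)) -
            (∑ i, X i j * (y i - X.mulVec (bhat lam0) i)))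
          (∑ i, X i j * (y i - X.mulVec (bhat lam0) i))
      simpa using this
    rw [habs] at hl
    linarith
  exact lasso_kkt_zero X y lam (bhat lam) (hpath lam hlam) j hclam
end

section
/- (Soundness of the basic strong rule under the unit slope condition.) Let λ_max = max_j |x_j^T y| and let β̂ : (0,∞) → ℝ^p be a solution path, i.e., for each μ > 0 the vector β̂(μ) minimizes the lasso objective (1/2)‖y − Xβ‖₂² + μ‖β‖₁, and define c_j(μ) = x_j^T(y − Xβ̂(μ)). Let 0 < λ ≤ λ_max. If the function μ ↦ c_j(μ) is 1-Lipschitz on [λ, λ_max] and |x_j^T y| < 2λ − λ_max, then β̂(λ)_j = 0. -/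
open Finset

section aux
variable {N p : ℕ} (X : Matrix (Fin N) (Fin p) ℝ) (y : Fin N → ℝ)

lemma lasso_expand (mu t : ℝ) (b : Fin p → ℝ) (j : Fin p) :
    lassoObj X y mu (Function.update b j (b j + t)) =
      lassoObj X y mu b - t * (∑ i, X i j * (y i - X.mulVec b i))
        + t ^ 2 * (∑ i, (X i j) ^ 2) / 2 + mu * (|b j + t| - |b j|) := by
  have hm : ∀ i, X.mulVec (Function.update b j (b j + t)) i = X.mulVec b i + t * X i j := by
    intro i
    simp only [Matrix.mulVec, dotProduct]
    have : ∀ k ∈ Finset.univ, X i k * Function.update b j (b j + t) k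
        = X i k * b k + (if k = j then t * X i j else 0) := by
      intro k _
      by_cases h : k = j
      · subst h; simp [Function.update_self]; ring
      · simp [Function.update_of_ne h, h]
    rw [Finset.sum_congr rfl this, Finset.sum_add_distrib, Finset.sum_ite_eq' Finset.univ j]
    simp
  have h1 : ∑ i, (y i - X.mulVec (Function.update b j (b j + t)) i) ^ 2
      = ∑ i, ((y i - X.mulVec b i) ^ 2 - 2 * t * (X i j * (y i - X.mulVec b i))
          + t ^ 2 * (X i j) ^ 2) := by
    refine Finset.sum_congr rfl fun i _ => ?_
    rw [hm]; ring
  have h2 : ∑ k, |Function.update b j (b j + t) k|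
      = ∑ k, (|b k| + (if k = j then |b j + t| - |b j| else 0)) := by
    refine Finset.sum_congr rfl fun k _ => ?_
    by_cases h : k = j
    · subst h; simp [Function.update_self]
    · simp [Function.update_of_ne h, h]
  unfold lassoObj
  rw [h1, h2, Finset.sum_add_distrib, Finset.sum_add_distrib, Finset.sum_sub_distrib,
    Finset.sum_ite_eq' Finset.univ j, ← Finset.mul_sum, ← Finset.mul_sum]
  simp only [Finset.mem_univ, if_true]
  ring

end aux

/-- Soundness of the basic strong rule under the unit slope condition: if `β̂(μ)` is a
lasso solution path, `c_j(μ) = x_j^T(y − Xβ̂(μ))` is 1-Lipschitz on `[λ, λ_max]`, and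
`|x_j^T y| < 2λ − λ_max`, then `β̂(λ)_j = 0`. -/
theorem basic_strong_rule_sound {N p : ℕ} (X : Matrix (Fin N) (Fin p) ℝ)
    (y : Fin N → ℝ) (lmax : ℝ)
    (hlmax : IsGreatest (Set.range fun j : Fin p => |∑ i, X i j * y i|) lmax)
    (bhat : ℝ → Fin p → ℝ)
    (hpath : ∀ mu : ℝ, 0 < mu →
      ∀ b : Fin p → ℝ, lassoObj X y mu (bhat mu) ≤ lassoObj X y mu b)
    (lam : ℝ) (hlam : 0 < lam) (hle : lam ≤ lmax) (j : Fin p)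
    (hlip : ∀ a ∈ Set.Icc lam lmax, ∀ b ∈ Set.Icc lam lmax,
      |(∑ i, X i j * (y i - X.mulVec (bhat a) i)) -
        (∑ i, X i j * (y i - X.mulVec (bhat b) i))| ≤ |a - b|)
    (hrule : |∑ i, X i j * y i| < 2 * lam - lmax) :
    bhat lam j = 0 := by
  have hlmaxpos : 0 < lmax := lt_of_lt_of_le hlam hle
  -- Step 1: 0 minimizes the lasso objective at lmax
  have hzero_min : ∀ b : Fin p → ℝ, lassoObj X y lmax 0 ≤ lassoObj X y lmax b := by
    intro b
    have hswap : ∑ i, y i * X.mulVec b i = ∑ k, b k * (∑ i, X i k * y i) := by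
      simp only [Matrix.mulVec, dotProduct, Finset.mul_sum, Finset.sum_mul]
      rw [Finset.sum_comm]
      exact Finset.sum_congr rfl fun k _ => Finset.sum_congr rfl fun i _ => by ring
    have hbd : ∑ i, y i * X.mulVec b i ≤ lmax * ∑ k, |b k| := by
      rw [hswap, Finset.mul_sum]
      refine Finset.sum_le_sum fun k _ => ?_
      calc b k * (∑ i, X i k * y i) ≤ |b k * (∑ i, X i k * y i)| := le_abs_self _
        _ = |b k| * |∑ i, X i k * y i| := abs_mul _ _
        _ ≤ |b k| * lmax := mul_le_mul_of_nonneg_left (hlmax.2 ⟨k, rfl⟩) (abs_nonneg _)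
        _ = lmax * |b k| := mul_comm _ _
    have hsq : (0:ℝ) ≤ ∑ i, (X.mulVec b i) ^ 2 :=
      Finset.sum_nonneg fun i _ => sq_nonneg _
    have hexp : ∑ i, (y i - X.mulVec b i) ^ 2
        = ∑ i, (y i) ^ 2 - 2 * ∑ i, y i * X.mulVec b i + ∑ i, (X.mulVec b i) ^ 2 := by
      have : ∑ i, (y i - X.mulVec b i) ^ 2
          = ∑ i, ((y i) ^ 2 - 2 * (y i * X.mulVec b i) + (X.mulVec b i) ^ 2) :=
        Finset.sum_congr rfl fun i _ => by ring
      rw [this, Finset.sum_add_distrib, Finset.sum_sub_distrib, ← Finset.mul_sum]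
    unfold lassoObj
    simp only [Matrix.mulVec_zero, Pi.zero_apply, abs_zero, Finset.sum_const_zero,
      mul_zero, sub_zero, add_zero]
    rw [hexp]
    nlinarith [hbd, hsq]
  -- Step 2: fitted values at lmax are zero
  have hfit : ∀ i, X.mulVec (bhat lmax) i = 0 := by
    set b1 := bhat lmax with hb1
    have heq : lassoObj X y lmax b1 = lassoObj X y lmax 0 :=
      le_antisymm (hpath lmax hlmaxpos 0) (hzero_min b1)
    -- midpoint
    have hmidv : ∀ i, X.mulVec (fun k => b1 k / 2) i = X.mulVec b1 i / 2 := by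
      intro i
      simp only [Matrix.mulVec, dotProduct]
      rw [Finset.sum_div]
      exact Finset.sum_congr rfl fun k _ => by ring
    have hmid : lassoObj X y lmax (fun k => b1 k / 2)
        = (1/2) * lassoObj X y lmax b1 + (1/2) * lassoObj X y lmax 0
          - (1/8) * ∑ i, (X.mulVec b1 i) ^ 2 := by
      unfold lassoObj
      simp only [Matrix.mulVec_zero, Pi.zero_apply, abs_zero, Finset.sum_const_zero,
        mul_zero, sub_zero, add_zero]
      have h1 : ∑ i, (y i - X.mulVec (fun k => b1 k / 2) i) ^ 2
          = ∑ i, ((1/2) * (y i - X.mulVec b1 i) ^ 2 + (1/2) * (y i) ^ 2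
              - (1/4) * (X.mulVec b1 i) ^ 2) := by
        refine Finset.sum_congr rfl fun i _ => ?_
        rw [hmidv]; ring
      have h2 : ∑ k, |b1 k / 2| = (1/2) * ∑ k, |b1 k| := by
        rw [Finset.mul_sum]
        refine Finset.sum_congr rfl fun k _ => ?_
        rw [abs_div]; simp [abs_of_pos]; ring
      rw [h1, h2, Finset.sum_sub_distrib, Finset.sum_add_distrib,
        ← Finset.mul_sum, ← Finset.mul_sum, ← Finset.mul_sum]
      ring
    have hge : lassoObj X y lmax b1 ≤ lassoObj X y lmax (fun k => b1 k / 2) :=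
      hpath lmax hlmaxpos _
    rw [hmid, heq] at hge
    have hsum0 : ∑ i, (X.mulVec b1 i) ^ 2 ≤ 0 := by linarith
    have hsq : ∀ i ∈ Finset.univ, (X.mulVec b1 i) ^ 2 = 0 := by
      intro i _
      have := Finset.sum_nonneg (fun i (_ : i ∈ Finset.univ) => sq_nonneg (X.mulVec b1 i))
      have hz : ∑ i, (X.mulVec b1 i) ^ 2 = 0 := le_antisymm hsum0 this
      exact (Finset.sum_eq_zero_iff_of_nonneg (fun i _ => sq_nonneg _)).mp hz i (Finset.mem_univ i)
    intro i
    exact pow_eq_zero_iff (by norm_num) |>.mp (hsq i (Finset.mem_univ i))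
  -- Step 3: |c_j(lam)| < lam
  have hcmax : (∑ i, X i j * (y i - X.mulVec (bhat lmax) i)) = ∑ i, X i j * y i := by
    refine Finset.sum_congr rfl fun i _ => ?_
    rw [hfit i]; ring
  set c := ∑ i, X i j * (y i - X.mulVec (bhat lam) i) with hc
  have hlipuse := hlip lam ⟨le_refl lam, hle⟩ lmax ⟨hle, le_refl lmax⟩
  rw [hcmax] at hlipuse
  have hclam : |c| < lam := by
    have h1 : |c| ≤ |c - ∑ i, X i j * y i| + |∑ i, X i j * y i| := by
      calc |c| = |(c - ∑ i, X i j * y i) + ∑ i, X i j * y i| := by ring_nf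
        _ ≤ _ := abs_add_le _ _
    have h2 : |lam - lmax| = lmax - lam := by
      rw [abs_sub_comm, abs_of_nonneg (by linarith)]
    rw [h2] at hlipuse
    linarith
  -- Step 4: conclude bhat lam j = 0
  by_contra hne
  set β := bhat lam with hβ
  have hβj : |β j| > 0 := abs_pos.mpr hne
  set K := ∑ i, (X i j) ^ 2 with hK
  have hKnn : (0:ℝ) ≤ K := Finset.sum_nonneg fun i _ => sq_nonneg _
  -- for ε ∈ (0,1]: lam * |β j| ≤ β j * c + ε * (β j)^2 * K / 2
  have key : ∀ ε : ℝ, 0 < ε → ε ≤ 1 → lam * |β j| ≤ β j * c + ε * ((β j) ^ 2 * K / 2) := by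
    intro ε hε hε1
    have hopt := hpath lam hlam (Function.update β j (β j + (-ε * β j)))
    rw [lasso_expand X y lam (-ε * β j) β j] at hopt
    have habs : |β j + -ε * β j| = (1 - ε) * |β j| := by
      have : β j + -ε * β j = (1 - ε) * β j := by ring
      rw [this, abs_mul, abs_of_nonneg (by linarith)]
    rw [habs] at hopt
    -- hopt : lassoObj β ≤ lassoObj β - (-ε β j) * c + (ε β j)^2 K / 2 + lam ((1-ε)|β j| - |β j|)
    have h3 : 0 ≤ ε * (β j * c) + ε ^ 2 * (β j) ^ 2 * K / 2 - lam * (ε * |β j|) := by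
      nlinarith [hopt]
    have h4 : ε * (lam * |β j|) ≤ ε * (β j * c + ε * ((β j) ^ 2 * K / 2)) := by nlinarith
    exact le_of_mul_le_mul_left (by linarith [h4]) hε
  have hfinal : lam * |β j| ≤ β j * c := by
    by_contra h
    push_neg at h
    set a := lam * |β j| - β j * c with ha
    have hapos : 0 < a := by simp [ha]; linarith
    set C := (β j) ^ 2 * K / 2 with hC
    have hCnn : 0 ≤ C := by positivity
    rcases eq_or_lt_of_le hCnn with hC0 | hCpos
    · have := key 1 one_pos le_rfl
      rw [← hC0] at this; simp at this; linarith
    · have hεdef : 0 < min 1 (a / (2 * C)) := lt_min one_pos (by positivity)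
      have := key (min 1 (a / (2 * C))) hεdef (min_le_left _ _)
      have h5 : min 1 (a / (2 * C)) * C ≤ (a / (2 * C)) * C :=
        mul_le_mul_of_nonneg_right (min_le_right _ _) hCnn
      have h6 : (a / (2 * C)) * C = a / 2 := by field_simp
      have : lam * |β j| ≤ β j * c + a / 2 := by
        calc lam * |β j| ≤ β j * c + min 1 (a / (2 * C)) * C := this
          _ ≤ β j * c + a / 2 := by rw [← h6]; linarith
      simp only [ha] at *
      linarith
  have : β j * c ≤ |β j| * |c| := by
    calc β j * c ≤ |β j * c| := le_abs_self _
      _ = |β j| * |c| := abs_mul _ _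
  have : lam * |β j| < lam * |β j| := by
    calc lam * |β j| ≤ β j * c := hfinal
      _ ≤ |β j| * |c| := this
      _ < |β j| * lam := by exact mul_lt_mul_of_pos_left hclam hβj
      _ = lam * |β j| := mul_comm _ _
  exact absurd this (lt_irrefl _)
end

section
/- (Equi-correlation model, diagonal dominance.) Let p ≥ 1, let 0 ≤ r < 1, and let G = (1−r)·I + r·𝟙𝟙^T be the p×p equi-correlation matrix. Then G^{-1} is diagonally dominant: for every row i, |(G^{-1})_{ii}| ≥ Σ_{j ≠ i} |(G^{-1})_{ij}|. -/
open Finset Matrix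

/-- Equi-correlation model: the inverse of `G = (1−r)I + r𝟙𝟙ᵀ` with `0 ≤ r < 1` is
diagonally dominant. -/
theorem equicorrelation_inverse_diagonally_dominant (p : ℕ) (hp : 1 ≤ p) (r : ℝ)
    (hr0 : 0 ≤ r) (hr1 : r < 1) (G : Matrix (Fin p) (Fin p) ℝ)
    (hG : G = (1 - r) • (1 : Matrix (Fin p) (Fin p) ℝ) +
      r • Matrix.of (fun _ _ : Fin p => (1 : ℝ))) :
    ∀ i : Fin p, ∑ j ∈ Finset.univ.erase i, |G⁻¹ i j| ≤ |G⁻¹ i i| := by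
  have hp1 : (1 : ℝ) ≤ p := by exact_mod_cast hp
  set a : ℝ := 1 - r with ha
  set c : ℝ := 1 + ((p : ℝ) - 1) * r with hc
  have hap : 0 < a := by simp [ha]; linarith
  have hcp : 0 < c := by rw [hc]; nlinarith
  set J : Matrix (Fin p) (Fin p) ℝ := Matrix.of (fun _ _ => 1) with hJ
  have hJJ : J * J = (p : ℝ) • J := by
    ext i j
    simp [hJ, Matrix.mul_apply]
  set d : ℝ := -(r / (a * c)) with hd
  set M : Matrix (Fin p) (Fin p) ℝ := a⁻¹ • 1 + d • J with hM
  have hGM : G * M = 1 := by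
    rw [hG, hM, add_mul, mul_add, mul_add]
    simp only [smul_mul_assoc, mul_smul_comm, Matrix.one_mul, Matrix.mul_one, hJJ, smul_smul]
    rw [inv_mul_cancel₀ hap.ne', one_smul, add_assoc, ← add_smul, ← add_smul]
    have h2 : d * a + (a⁻¹ * r + d * (r * (p : ℝ))) = 0 := by
      have h1 : (1 - r) ≠ 0 := (by linarith : (0:ℝ) < 1 - r).ne'
      have h3 : 1 - r + r * (p : ℝ) ≠ 0 := by have := hcp.ne'; rw [hc] at this; contrapose! this; linarith
      rw [hd, ha, hc]; field_simp; linear_combination (-r) * inv_mul_cancel₀ h3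
    rw [h2, zero_smul, add_zero]
  have hGinv : G⁻¹ = M := Matrix.inv_eq_right_inv hGM
  intro i
  have hdiag : G⁻¹ i i = a⁻¹ + d := by
    rw [hGinv, hM]
    simp only [Matrix.add_apply, Matrix.smul_apply, Matrix.one_apply_eq, hJ,
      Matrix.of_apply, smul_eq_mul, mul_one]
  have hoff : ∀ j : Fin p, j ≠ i → G⁻¹ i j = d := by
    intro j hj
    rw [hGinv, hM]
    simp only [Matrix.add_apply, Matrix.smul_apply, Matrix.one_apply_ne (Ne.symm hj), hJ,
      Matrix.of_apply, smul_eq_mul, mul_zero, zero_add, mul_one]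
  have hsum : ∑ j ∈ Finset.univ.erase i, |G⁻¹ i j| = ((p : ℝ) - 1) * |d| := by
    rw [Finset.sum_congr rfl (fun j hj => by
      rw [hoff j (Finset.ne_of_mem_erase hj)])]
    rw [Finset.sum_const, Finset.card_erase_of_mem (Finset.mem_univ i)]
    simp only [Finset.card_univ, Fintype.card_fin, nsmul_eq_mul]
    rw [Nat.cast_sub hp]
    norm_num
  rw [hsum, hdiag]
  have hdabs : |d| = r / (a * c) := by
    rw [hd, abs_neg, abs_of_nonneg (by positivity)]
  have hsum2 : a⁻¹ + d = (c - r) / (a * c) := by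
    rw [hd]; field_simp; ring
  have hcr0 : 0 ≤ c - r := by
    have : 0 ≤ ((p : ℝ) - 1) * r := mul_nonneg (by linarith) hr0
    rw [hc]; linarith
  rw [hdabs, hsum2, abs_of_nonneg (div_nonneg hcr0 (by positivity)), mul_div_assoc']
  gcongr
  rw [hc]; nlinarith
end

section
/- (Elastic net as an augmented lasso.) Let X be a real N×p matrix, y ∈ ℝ^N, and λ₂ ≥ 0. Define the (N+p)×p matrix X* by stacking X on top of √λ₂·I (the p×p identity scaled by √λ₂), and define y* ∈ ℝ^{N+p} by stacking y on top of the zero vector in ℝ^p. Then for every β ∈ ℝ^p, (1/2)‖y* − X*β‖₂² = (1/2)‖y − Xβ‖₂² + (1/2)λ₂‖β‖₂². Consequently, for any λ₁ ≥ 0, β minimizes the elastic net objective (1/2)‖y − Xβ‖₂² + (1/2)λ₂‖β‖₂² + λ₁‖β‖₁ if and only if β minimizes the lasso objective (1/2)‖y* − X*β‖₂² + λ₁‖β‖₁. -/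
open Finset Matrix

/-- Elastic net as an augmented lasso: with `X* = [X; √λ₂·I]` and `y* = [y; 0]`,
`(1/2)‖y* − X*β‖₂² = (1/2)‖y − Xβ‖₂² + (1/2)λ₂‖β‖₂²`, and hence `β` minimizes the
elastic net objective iff it minimizes the lasso objective for the augmented data. -/
theorem elastic_net_as_augmented_lasso {N p : ℕ} (X : Matrix (Fin N) (Fin p) ℝ)
    (y : Fin N → ℝ) (l2 : ℝ) (hl2 : 0 ≤ l2)
    (Xstar : Matrix (Fin N ⊕ Fin p) (Fin p) ℝ)
    (hXstar : Xstar = Matrix.fromRows X (Real.sqrt l2 • (1 : Matrix (Fin p) (Fin p) ℝ)))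
    (ystar : Fin N ⊕ Fin p → ℝ) (hystar : ystar = Sum.elim y 0) :
    (∀ b : Fin p → ℝ,
      (1 / 2) * ∑ i, (ystar i - Xstar.mulVec b i) ^ 2 =
        (1 / 2) * ∑ i, (y i - X.mulVec b i) ^ 2 + (1 / 2) * l2 * ∑ j, b j ^ 2) ∧
    (∀ l1 : ℝ, 0 ≤ l1 → ∀ b : Fin p → ℝ,
      (∀ b' : Fin p → ℝ,
          (1 / 2) * ∑ i, (y i - X.mulVec b i) ^ 2 + (1 / 2) * l2 * ∑ j, b j ^ 2
            + l1 * ∑ j, |b j| ≤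
          (1 / 2) * ∑ i, (y i - X.mulVec b' i) ^ 2 + (1 / 2) * l2 * ∑ j, b' j ^ 2
            + l1 * ∑ j, |b' j|) ↔
      (∀ b' : Fin p → ℝ,
          (1 / 2) * ∑ i, (ystar i - Xstar.mulVec b i) ^ 2 + l1 * ∑ j, |b j| ≤
          (1 / 2) * ∑ i, (ystar i - Xstar.mulVec b' i) ^ 2 + l1 * ∑ j, |b' j|)) := by
  have key : ∀ b : Fin p → ℝ,
      (1 / 2) * ∑ i, (ystar i - Xstar.mulVec b i) ^ 2 =
        (1 / 2) * ∑ i, (y i - X.mulVec b i) ^ 2 + (1 / 2) * l2 * ∑ j, b j ^ 2 := by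
    intro b
    subst hXstar hystar
    rw [Fintype.sum_sum_type]
    simp only [Matrix.fromRows_mulVec, Sum.elim_inl, Sum.elim_inr, Matrix.smul_mulVec,
      Matrix.one_mulVec, Pi.zero_apply, Pi.smul_apply, smul_eq_mul, zero_sub, neg_sq, mul_pow,
      Real.sq_sqrt hl2]
    rw [← Finset.mul_sum, mul_add]
    ring
  refine ⟨key, fun l1 hl1 b => ?_⟩
  constructor
  · intro h b'
    rw [key b, key b']
    linarith [h b']
  · intro h b'
    have := h b'
    rw [key b, key b'] at this
    linarith
end

section
/- (KKT exclusion rule for ℓ₁-penalized logistic regression.) Let X be a real N×p matrix with rows x_1,…,x_N and columns denoted x^{(j)}, let y ∈ {0,1}^N, and let λ > 0. For (β₀, β) ∈ ℝ × ℝ^p let p_i(β₀, β) = 1/(1 + exp(−β₀ − x_i^T β)) and define the penalized negative log-likelihood ℓ(β₀, β) = −Σ_{i=1}^N [ y_i log p_i(β₀,β) + (1−y_i) log(1 − p_i(β₀,β)) ] + λ‖β‖₁. If (β̂₀, β̂) minimizes ℓ and for some index j we have |Σ_{i=1}^N X_{ij}(y_i − p_i(β̂₀, β̂))| < λ, then β̂_j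 = 0. -/
open Finset

/-- The logistic probability `p_i(β₀, β) = 1/(1 + exp(−β₀ − x_iᵀβ))`. -/
noncomputable def logisticProb {N p : ℕ} (X : Matrix (Fin N) (Fin p) ℝ)
    (b0 : ℝ) (b : Fin p → ℝ) (i : Fin N) : ℝ :=
  1 / (1 + Real.exp (-b0 - ∑ j, X i j * b j))

/-- The ℓ₁-penalized negative log-likelihood for logistic regression. -/
noncomputable def logisticObj {N p : ℕ} (X : Matrix (Fin N) (Fin p) ℝ)
    (y : Fin N → ℝ) (lam : ℝ) (b0 : ℝ) (b : Fin p → ℝ) : ℝ :=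
  -(∑ i, (y i * Real.log (logisticProb X b0 b i) +
      (1 - y i) * Real.log (1 - logisticProb X b0 b i))) + lam * ∑ j, |b j|

private lemma log_term_key (c yi : ℝ) :
    -(yi * Real.log (1 / (1 + Real.exp (-c))) +
      (1 - yi) * Real.log (1 - 1 / (1 + Real.exp (-c)))) =
    Real.log (1 + Real.exp (-c)) + (1 - yi) * c := by
  have hE : (0:ℝ) < Real.exp (-c) := Real.exp_pos _
  have h1 : (0:ℝ) < 1 + Real.exp (-c) := by linarith
  have h2 : 1 - 1 / (1 + Real.exp (-c)) = Real.exp (-c) / (1 + Real.exp (-c)) := by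
    field_simp
    ring
  rw [h2, Real.log_div (ne_of_gt hE) (ne_of_gt h1), Real.log_exp, one_div, Real.log_inv]
  ring

/-- KKT exclusion rule for ℓ₁-penalized logistic regression: if `(β̂₀, β̂)` minimizes the
penalized negative log-likelihood and `|Σᵢ X_{ij}(yᵢ − pᵢ(β̂₀, β̂))| < λ`, then `β̂_j = 0`. -/
theorem logistic_kkt_exclusion {N p : ℕ} (X : Matrix (Fin N) (Fin p) ℝ)
    (y : Fin N → ℝ) (hy : ∀ i, y i = 0 ∨ y i = 1) (lam : ℝ) (hlam : 0 < lam)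
    (bhat0 : ℝ) (bhat : Fin p → ℝ)
    (hmin : ∀ (b0 : ℝ) (b : Fin p → ℝ),
      logisticObj X y lam bhat0 bhat ≤ logisticObj X y lam b0 b)
    (j : Fin p)
    (hj : |∑ i, X i j * (y i - logisticProb X bhat0 bhat i)| < lam) :
    bhat j = 0 := by
  by_contra hne
  set t0 : ℝ := bhat j with ht0
  -- the linear predictor as a function of coordinate j
  set η : Fin N → ℝ → ℝ :=
    fun i t => bhat0 + ∑ k, X i k * Function.update bhat j t k with hηdef
  set G : ℝ → ℝ :=
    fun t => ∑ i, (Real.log (1 + Real.exp (-(η i t))) + (1 - y i) * η i t) with hGdef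
  have hηlin : ∀ i t,
      η i t = (bhat0 + ∑ k ∈ univ.erase j, X i k * bhat k) + X i j * t := by
    intro i t
    simp only [hηdef]
    rw [← Finset.add_sum_erase _ _ (Finset.mem_univ j), Function.update_self]
    have : ∑ k ∈ univ.erase j, X i k * Function.update bhat j t k
        = ∑ k ∈ univ.erase j, X i k * bhat k := by
      refine Finset.sum_congr rfl fun k hk => ?_
      rw [Function.update_of_ne (Finset.ne_of_mem_erase hk)]
    rw [this]; ring
  have hηt0 : ∀ i, η i t0 = bhat0 + ∑ k, X i k * bhat k := by
    intro i
    simp only [hηdef, ← ht0, Function.update_eq_self]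
    rw [show Function.update bhat j t0 = bhat from Function.update_eq_self j bhat]
  -- probability in terms of η
  have hprob : ∀ i t, logisticProb X bhat0 (Function.update bhat j t) i
      = 1 / (1 + Real.exp (-(η i t))) := by
    intro i t
    simp only [logisticProb, hηdef]
    ring_nf
  have hprob0 : ∀ i, logisticProb X bhat0 bhat i
      = 1 / (1 + Real.exp (-(η i t0))) := by
    intro i
    have := hprob i t0
    rwa [show Function.update bhat j t0 = bhat from Function.update_eq_self j bhat] at this
  -- rewrite the objective along the line
  have hobj : ∀ t, logisticObj X y lam bhat0 (Function.update bhat j t)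
      = G t + lam * (|t| + ∑ k ∈ univ.erase j, |bhat k|) := by
    intro t
    have hpen : ∑ k, |Function.update bhat j t k|
        = |t| + ∑ k ∈ univ.erase j, |bhat k| := by
      rw [← Finset.add_sum_erase _ _ (Finset.mem_univ j), Function.update_self]
      congr 1
      refine Finset.sum_congr rfl fun k hk => ?_
      rw [Function.update_of_ne (Finset.ne_of_mem_erase hk)]
    have hloss : -(∑ i, (y i * Real.log (logisticProb X bhat0 (Function.update bhat j t) i) +
        (1 - y i) * Real.log (1 - logisticProb X bhat0 (Function.update bhat j t) i))) = G t := by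
      rw [← Finset.sum_neg_distrib]
      refine Finset.sum_congr rfl fun i _ => ?_
      rw [hprob i t]
      exact log_term_key (η i t) (y i)
    simp only [logisticObj]
    rw [hloss, hpen]
  -- the one-dimensional minimality
  have hfmin : ∀ t, G t0 + lam * |t0| ≤ G t + lam * |t| := by
    intro t
    have h1 := hmin bhat0 (Function.update bhat j t)
    rw [hobj t] at h1
    have h2 : logisticObj X y lam bhat0 bhat
        = G t0 + lam * (|t0| + ∑ k ∈ univ.erase j, |bhat k|) := by
      have := hobj t0
      rwa [show Function.update bhat j t0 = bhat from Function.update_eq_self j bhat] at this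
    rw [h2] at h1
    rw [mul_add, mul_add] at h1
    linarith
  have hloc : IsLocalMin (fun t => G t + lam * |t|) t0 :=
    Filter.Eventually.of_forall hfmin
  -- derivative of G at t0
  have hpos : ∀ i t, (0:ℝ) < 1 + Real.exp (-(η i t)) := by
    intro i t; have := Real.exp_pos (-(η i t)); linarith
  have hGderiv : HasDerivAt G
      (∑ i, (Real.exp (-(η i t0)) * (-X i j) / (1 + Real.exp (-(η i t0)))
        + (1 - y i) * X i j)) t0 := by
    apply HasDerivAt.fun_sum
    intro i _
    have hηfun : η i = fun t => (bhat0 + ∑ k ∈ univ.erase j, X i k * bhat k) + X i j * t :=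
      funext (hηlin i)
    have hηd : HasDerivAt (η i) (X i j) t0 := by
      rw [hηfun]
      simpa using ((hasDerivAt_id t0).const_mul (X i j)).const_add
        (bhat0 + ∑ k ∈ univ.erase j, X i k * bhat k)
    have hexp : HasDerivAt (fun t => Real.exp (-(η i t)))
        (Real.exp (-(η i t0)) * (-X i j)) t0 := hηd.neg.exp
    have hlog : HasDerivAt (fun t => Real.log (1 + Real.exp (-(η i t))))
        (Real.exp (-(η i t0)) * (-X i j) / (1 + Real.exp (-(η i t0)))) t0 := by
      have := (hexp.const_add 1).log (ne_of_gt (hpos i t0))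
      simpa using this
    exact hlog.add (hηd.const_mul (1 - y i))
  -- identify the derivative with -S
  set S : ℝ := ∑ i, X i j * (y i - logisticProb X bhat0 bhat i) with hSdef
  have hD : (∑ i, (Real.exp (-(η i t0)) * (-X i j) / (1 + Real.exp (-(η i t0)))
      + (1 - y i) * X i j)) = -S := by
    rw [hSdef, ← Finset.sum_neg_distrib]
    refine Finset.sum_congr rfl fun i _ => ?_
    rw [hprob0 i]
    have h1 := hpos i t0
    field_simp
    ring
  rw [hD] at hGderiv
  -- split on the sign of t0
  rcases lt_or_gt_of_ne hne with hneg | hposj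
  · -- t0 < 0
    have heq : (fun t => G t + lam * (-t)) =ᶠ[nhds t0] (fun t => G t + lam * |t|) := by
      filter_upwards [eventually_lt_nhds hneg] with t ht
      rw [abs_of_neg ht]
    have hd : HasDerivAt (fun t => G t + lam * |t|) (-S + lam * (-1)) t0 := by
      refine HasDerivAt.congr_of_eventuallyEq ?_ heq.symm
      exact hGderiv.add ((hasDerivAt_id t0).neg.const_mul lam)
    have h0 := hloc.hasDerivAt_eq_zero hd
    have hS : S = -lam := by linarith
    rw [hS, abs_neg, abs_of_pos hlam] at hj
    exact lt_irrefl _ hj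
  · -- t0 > 0
    have heq : (fun t => G t + lam * t) =ᶠ[nhds t0] (fun t => G t + lam * |t|) := by
      filter_upwards [eventually_gt_nhds hposj] with t ht
      rw [abs_of_pos ht]
    have hd : HasDerivAt (fun t => G t + lam * |t|) (-S + lam * 1) t0 := by
      refine HasDerivAt.congr_of_eventuallyEq ?_ heq.symm
      exact hGderiv.add ((hasDerivAt_id t0).const_mul lam)
    have h0 := hloc.hasDerivAt_eq_zero hd
    have hS : S = lam := by linarith
    rw [hS, abs_of_pos hlam] at hj
    exact lt_irrefl _ hj
end

section
/- (Graphical lasso subgradient bound.) Let S be a real symmetric p×p matrix and λ > 0. Suppose Θ̂ is a symmetric positive definite p×p matrix that maximizes the penalized log-likelihood log det Θ − tr(SΘ) − λ Σ_{i≠j} |Θ_{ij}| over symmetric positive definite matrices Θ (the diagonal is not penalized). Let Σ̂ = Θ̂^{-1}. Then Σ̂_{ii} = S_{ii} for every i, and for all i ≠ j: |Σ̂_{ij} − S_{ij}| ≤ λ, with Σ̂_{ij} − S_{ij} = λ·sign(Θ̂_{ij}) whenever Θ̂_{ij} ≠ 0. -/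
open Finset Matrix

/- ### Auxiliary lemmas -/

lemma deriv_nonpos_of_right {ψ : ℝ → ℝ} {d : ℝ} (hd : HasDerivAt ψ d 0) (h0 : ψ 0 = 0)
    (h : ∀ᶠ t in nhdsWithin 0 (Set.Ioi 0), ψ t ≤ 0) : d ≤ 0 := by
  have ht : Filter.Tendsto (slope ψ 0) (nhdsWithin 0 {(0:ℝ)}ᶜ) (nhds d) :=
    hasDerivAt_iff_tendsto_slope.1 hd
  have ht' : Filter.Tendsto (slope ψ 0) (nhdsWithin 0 (Set.Ioi 0)) (nhds d) :=
    ht.mono_left (nhdsWithin_mono _ (fun x hx => ne_of_gt hx))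
  refine le_of_tendsto ht' ?_
  filter_upwards [h, self_mem_nhdsWithin] with t h1 h2
  rw [slope_def_field, h0, sub_zero, sub_zero]
  exact div_nonpos_of_nonpos_of_nonneg h1 (le_of_lt h2)

lemma deriv_nonneg_of_left {ψ : ℝ → ℝ} {d : ℝ} (hd : HasDerivAt ψ d 0) (h0 : ψ 0 = 0)
    (h : ∀ᶠ t in nhdsWithin 0 (Set.Iio 0), ψ t ≤ 0) : 0 ≤ d := by
  have ht : Filter.Tendsto (slope ψ 0) (nhdsWithin 0 {(0:ℝ)}ᶜ) (nhds d) :=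
    hasDerivAt_iff_tendsto_slope.1 hd
  have ht' : Filter.Tendsto (slope ψ 0) (nhdsWithin 0 (Set.Iio 0)) (nhds d) :=
    ht.mono_left (nhdsWithin_mono _ (fun x hx => ne_of_lt hx))
  refine ge_of_tendsto ht' ?_
  filter_upwards [h, self_mem_nhdsWithin] with t h1 h2
  rw [slope_def_field, h0, sub_zero, sub_zero]
  exact div_nonneg_of_nonpos h1 (le_of_lt h2)

lemma mul_inv_entry {p : ℕ} (Θ : Matrix (Fin p) (Fin p) ℝ) (hdet : IsUnit Θ.det)
    (k i : Fin p) : ∑ x : Fin p, Θ k x * Θ⁻¹ x i = if k = i then 1 else 0 := by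
  have h := Matrix.mul_nonsing_inv Θ hdet
  have := congrFun (congrFun h k) i
  simpa [Matrix.mul_apply, Matrix.one_apply] using this

lemma det_add_smul_single {p : ℕ} (Θ : Matrix (Fin p) (Fin p) ℝ) (hdet : IsUnit Θ.det)
    (i : Fin p) (t : ℝ) :
    (Θ + t • Matrix.single i i 1).det = Θ.det * (1 + t * Θ⁻¹ i i) := by
  set U : Matrix (Fin p) (Fin 1) ℝ := Matrix.of (fun k _ => t * Θ⁻¹ k i) with hU
  set V : Matrix (Fin 1) (Fin p) ℝ := Matrix.of (fun _ l => if l = i then (1:ℝ) else 0) with hV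
  have hfac : Θ + t • Matrix.single i i 1 = Θ * (1 + U * V) := by
    have h1 : Θ * (U * V) = t • Matrix.single i i 1 := by
      ext k l
      simp only [Matrix.mul_apply, hU, hV, Matrix.of_apply, Fin.sum_univ_one,
        Matrix.smul_apply, Matrix.single, smul_eq_mul, Matrix.of_apply]
      by_cases hl : l = i
      · subst hl
        simp only [if_pos rfl, if_true, mul_one, and_true]
        have h2 : ∑ x : Fin p, Θ k x * (t * Θ⁻¹ x l) = t * ∑ x : Fin p, Θ k x * Θ⁻¹ x l := by
          rw [Finset.mul_sum]; congr 1; ext x; ring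
        rw [h2, mul_inv_entry Θ hdet k l]
        by_cases hk : k = l <;> simp [hk, eq_comm]
      · simp only [if_neg hl, mul_zero, Finset.sum_const_zero]
        have : ¬(i = k ∧ i = l) := fun h => hl h.2.symm
        rw [if_neg this, mul_zero]
    rw [Matrix.mul_add, Matrix.mul_one, h1]
  rw [hfac, Matrix.det_mul, Matrix.det_one_add_mul_comm, Matrix.det_fin_one]
  congr 1
  simp [Matrix.add_apply, Matrix.mul_apply, hU, hV, Matrix.one_apply]

lemma det_add_smul_pair {p : ℕ} (Θ : Matrix (Fin p) (Fin p) ℝ) (hdet : IsUnit Θ.det)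
    (i j : Fin p) (t : ℝ) :
    (Θ + t • (Matrix.single i j 1 + Matrix.single j i 1)).det
      = Θ.det * ((1 + t * Θ⁻¹ j i) * (1 + t * Θ⁻¹ i j) - (t * Θ⁻¹ j j) * (t * Θ⁻¹ i i)) := by
  set U : Matrix (Fin p) (Fin 2) ℝ :=
    Matrix.of (fun k a => if a = 0 then t * Θ⁻¹ k i else t * Θ⁻¹ k j) with hU
  set V : Matrix (Fin 2) (Fin p) ℝ :=
    Matrix.of (fun a l => if a = 0 then (if l = j then (1:ℝ) else 0)
      else (if l = i then (1:ℝ) else 0)) with hV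
  have hfac : Θ + t • (Matrix.single i j 1 + Matrix.single j i 1) = Θ * (1 + U * V) := by
    have h1 : Θ * (U * V) = t • (Matrix.single i j 1 + Matrix.single j i 1) := by
      ext k l
      have hUV : ∀ x, (U * V) x l
          = t * Θ⁻¹ x i * (if l = j then (1:ℝ) else 0)
            + t * Θ⁻¹ x j * (if l = i then (1:ℝ) else 0) := by
        intro x
        simp [Matrix.mul_apply, Fin.sum_univ_two, hU, hV]
      rw [Matrix.mul_apply]
      simp only [hUV]
      have hsum : ∑ x : Fin p, Θ k x * (t * Θ⁻¹ x i * (if l = j then (1:ℝ) else 0)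
            + t * Θ⁻¹ x j * (if l = i then (1:ℝ) else 0))
          = (if l = j then (1:ℝ) else 0) * t * (∑ x : Fin p, Θ k x * Θ⁻¹ x i)
            + (if l = i then (1:ℝ) else 0) * t * (∑ x : Fin p, Θ k x * Θ⁻¹ x j) := by
        rw [Finset.mul_sum, Finset.mul_sum, ← Finset.sum_add_distrib]
        exact Finset.sum_congr rfl (fun x _ => by ring)
      rw [hsum, mul_inv_entry Θ hdet k i, mul_inv_entry Θ hdet k j]
      simp only [Matrix.smul_apply, Matrix.add_apply, Matrix.single, Matrix.of_apply,
        smul_eq_mul]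
      simp only [@eq_comm (Fin p) i k, @eq_comm (Fin p) j k, @eq_comm (Fin p) i l,
        @eq_comm (Fin p) j l]
      by_cases hlj : l = j <;> by_cases hli : l = i <;> by_cases hki : k = i <;>
        by_cases hkj : k = j <;> simp_all <;> ring
    rw [Matrix.mul_add, Matrix.mul_one, h1]
  rw [hfac, Matrix.det_mul, Matrix.det_one_add_mul_comm, Matrix.det_fin_two]
  congr 1
  have e00 : (1 + V * U : Matrix (Fin 2) (Fin 2) ℝ) 0 0 = 1 + t * Θ⁻¹ j i := by
    simp [Matrix.add_apply, Matrix.mul_apply, hU, hV, Matrix.one_apply, Finset.sum_ite_eq]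
  have e11 : (1 + V * U : Matrix (Fin 2) (Fin 2) ℝ) 1 1 = 1 + t * Θ⁻¹ i j := by
    simp [Matrix.add_apply, Matrix.mul_apply, hU, hV, Matrix.one_apply, Finset.sum_ite_eq]
  have e01 : (1 + V * U : Matrix (Fin 2) (Fin 2) ℝ) 0 1 = t * Θ⁻¹ j j := by
    simp [Matrix.add_apply, Matrix.mul_apply, hU, hV, Matrix.one_apply, Finset.sum_ite_eq]
  have e10 : (1 + V * U : Matrix (Fin 2) (Fin 2) ℝ) 1 0 = t * Θ⁻¹ i i := by
    simp [Matrix.add_apply, Matrix.mul_apply, hU, hV, Matrix.one_apply, Finset.sum_ite_eq]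
  rw [e00, e11, e01, e10]

lemma posSemidef_CS {p : ℕ} {Θ : Matrix (Fin p) (Fin p) ℝ} (hpsd : Θ.PosSemidef)
    (hsymm : Θ.IsSymm) (x y : Fin p → ℝ) :
    (x ⬝ᵥ (Θ *ᵥ y)) ^ 2 ≤ (x ⬝ᵥ (Θ *ᵥ x)) * (y ⬝ᵥ (Θ *ᵥ y)) := by
  have hsym : ∀ u v : Fin p → ℝ, u ⬝ᵥ (Θ *ᵥ v) = v ⬝ᵥ (Θ *ᵥ u) := by
    intro u v
    calc u ⬝ᵥ (Θ *ᵥ v) = (u ᵥ* Θ) ⬝ᵥ v := Matrix.dotProduct_mulVec u Θ v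
    _ = (Θᵀ *ᵥ u) ⬝ᵥ v := by rw [← Matrix.vecMul_transpose, Matrix.transpose_transpose]
    _ = (Θ *ᵥ u) ⬝ᵥ v := by rw [hsymm.eq]
    _ = v ⬝ᵥ (Θ *ᵥ u) := dotProduct_comm _ _
  have key : ∀ s : ℝ, 0 ≤ (y ⬝ᵥ (Θ *ᵥ y)) * (s * s) + (2 * (x ⬝ᵥ (Θ *ᵥ y))) * s
      + (x ⬝ᵥ (Θ *ᵥ x)) := by
    intro s
    have h := hpsd.dotProduct_mulVec_nonneg (x + s • y)
    have hst : star (x + s • y) = x + s • y := by simp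
    rw [hst] at h
    have hexp : (x + s • y) ⬝ᵥ (Θ *ᵥ (x + s • y))
        = (y ⬝ᵥ (Θ *ᵥ y)) * (s * s) + (2 * (x ⬝ᵥ (Θ *ᵥ y))) * s + (x ⬝ᵥ (Θ *ᵥ x)) := by
      rw [Matrix.mulVec_add, Matrix.mulVec_smul, add_dotProduct,
        smul_dotProduct, dotProduct_add, dotProduct_add,
        dotProduct_smul, dotProduct_smul]
      rw [hsym y x]
      simp [smul_eq_mul]; ring
    rw [hexp] at h
    exact h
  have hd := discrim_le_zero key
  rw [discrim] at hd
  nlinarith [hd]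

lemma abs_entry_mul_le_dot {p : ℕ} (x : Fin p → ℝ) (k l : Fin p) :
    |x k * x l| ≤ x ⬝ᵥ x := by
  have hsq : ∀ k : Fin p, x k * x k ≤ x ⬝ᵥ x := fun k =>
    Finset.single_le_sum (f := fun m => x m * x m)
      (fun m _ => mul_self_nonneg (x m)) (Finset.mem_univ k)
  have h1 := hsq k
  have h2 := hsq l
  have habs : |x k * x l| = |x k| * |x l| := abs_mul _ _
  nlinarith [sq_nonneg (|x k| - |x l|), sq_abs (x k), sq_abs (x l), abs_nonneg (x k),
    abs_nonneg (x l)]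

lemma quad_upper {p : ℕ} (A : Matrix (Fin p) (Fin p) ℝ) (x : Fin p → ℝ) :
    x ⬝ᵥ (A *ᵥ x) ≤ (∑ k, ∑ l, |A k l|) * (x ⬝ᵥ x) := by
  calc x ⬝ᵥ (A *ᵥ x) = ∑ k, ∑ l, x k * (A k l * x l) := by
        simp [dotProduct, Matrix.mulVec, Finset.mul_sum]
    _ ≤ ∑ k, ∑ l, |A k l| * (x ⬝ᵥ x) := by
        refine Finset.sum_le_sum (fun k _ => Finset.sum_le_sum (fun l _ => ?_))
        have h1 : x k * (A k l * x l) ≤ |A k l * (x k * x l)| := by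
          rw [show x k * (A k l * x l) = A k l * (x k * x l) by ring]
          exact le_abs_self _
        have h2 : |A k l * (x k * x l)| = |A k l| * |x k * x l| := abs_mul _ _
        have h3 : |A k l| * |x k * x l| ≤ |A k l| * (x ⬝ᵥ x) :=
          mul_le_mul_of_nonneg_left (abs_entry_mul_le_dot x k l) (abs_nonneg _)
        linarith
    _ = (∑ k, ∑ l, |A k l|) * (x ⬝ᵥ x) := by
          rw [Finset.sum_mul]
          exact Finset.sum_congr rfl (fun k _ => (Finset.sum_mul _ _ _).symm)

lemma posdef_coercive {p : ℕ} {Θ : Matrix (Fin p) (Fin p) ℝ} (hpd : Θ.PosDef)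
    (hsymm : Θ.IsSymm) (hp : 0 < p) :
    ∃ c : ℝ, 0 < c ∧ ∀ x : Fin p → ℝ, c * (x ⬝ᵥ x) ≤ x ⬝ᵥ (Θ *ᵥ x) := by
  have hdet : IsUnit Θ.det := hpd.det_pos.ne'.isUnit
  have hinv : (Θ⁻¹).PosDef := hpd.inv
  set C : ℝ := ∑ k, ∑ l, |Θ⁻¹ k l| with hC
  have hCpos : 0 < C := by
    set z : Fin p → ℝ := Pi.single ⟨0, hp⟩ 1 with hz
    have hz0 : z ≠ 0 := by
      intro h
      have := congrFun h ⟨0, hp⟩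
      simp [hz] at this
    have h1 : 0 < z ⬝ᵥ (Θ⁻¹ *ᵥ z) := by
      have := hinv.dotProduct_mulVec_pos hz0
      simpa using this
    have h2 : z ⬝ᵥ (Θ⁻¹ *ᵥ z) ≤ C * (z ⬝ᵥ z) := quad_upper Θ⁻¹ z
    have h3 : z ⬝ᵥ z = 1 := by simp [hz, dotProduct, Pi.single_apply]
    rw [h3, mul_one] at h2
    linarith
  refine ⟨1 / C, by positivity, fun x => ?_⟩
  by_cases hx : x = 0
  · simp [hx]
  · have hxx : 0 < x ⬝ᵥ x := by
      rcases lt_or_eq_of_le (Finset.sum_nonneg (fun m (_ : m ∈ Finset.univ) =>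
        mul_self_nonneg (x m)) : (0:ℝ) ≤ x ⬝ᵥ x) with h | h
      · exact h
      · exact absurd (dotProduct_self_eq_zero.1 h.symm) hx
    have hCS : (x ⬝ᵥ (Θ *ᵥ (Θ⁻¹ *ᵥ x))) ^ 2
        ≤ (x ⬝ᵥ (Θ *ᵥ x)) * ((Θ⁻¹ *ᵥ x) ⬝ᵥ (Θ *ᵥ (Θ⁻¹ *ᵥ x))) :=
      posSemidef_CS hpd.posSemidef hsymm x (Θ⁻¹ *ᵥ x)
    have hΘΘinv : Θ *ᵥ (Θ⁻¹ *ᵥ x) = x := by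
      rw [Matrix.mulVec_mulVec, Matrix.mul_nonsing_inv Θ hdet, Matrix.one_mulVec]
    rw [hΘΘinv] at hCS
    have hcomm : (Θ⁻¹ *ᵥ x) ⬝ᵥ x = x ⬝ᵥ (Θ⁻¹ *ᵥ x) := dotProduct_comm _ _
    rw [hcomm] at hCS
    have hub : x ⬝ᵥ (Θ⁻¹ *ᵥ x) ≤ C * (x ⬝ᵥ x) := quad_upper Θ⁻¹ x
    have hΘx : 0 ≤ x ⬝ᵥ (Θ *ᵥ x) := le_of_lt (by simpa using hpd.dotProduct_mulVec_pos hx)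
    have step : (x ⬝ᵥ x) ^ 2 ≤ (x ⬝ᵥ (Θ *ᵥ x)) * (C * (x ⬝ᵥ x)) := by
      calc (x ⬝ᵥ x) ^ 2 ≤ (x ⬝ᵥ (Θ *ᵥ x)) * (x ⬝ᵥ (Θ⁻¹ *ᵥ x)) := hCS
        _ ≤ (x ⬝ᵥ (Θ *ᵥ x)) * (C * (x ⬝ᵥ x)) := mul_le_mul_of_nonneg_left hub hΘx
    rw [div_mul_eq_mul_div, one_mul, div_le_iff₀ hCpos]
    nlinarith [step, hxx]

lemma trace_mul_std {p : ℕ} (S : Matrix (Fin p) (Fin p) ℝ) (i j : Fin p) :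
    (S * Matrix.single i j (1:ℝ)).trace = S j i := by
  simp [Matrix.trace, Matrix.diag, Matrix.mul_apply, Matrix.single, ite_and,
    Finset.sum_ite_eq, Finset.sum_ite_eq']

lemma std_pair_symm {p : ℕ} (i j : Fin p) :
    (Matrix.single i j (1:ℝ) + Matrix.single j i 1).IsSymm := by
  rw [Matrix.IsSymm]
  ext k l
  simp [Matrix.transpose_apply, Matrix.single, and_comm, add_comm]

lemma std_diag_symm {p : ℕ} (i : Fin p) : (Matrix.single i i (1:ℝ)).IsSymm := by
  rw [Matrix.IsSymm]
  ext k l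
  simp [Matrix.transpose_apply, Matrix.single, and_comm]

lemma quad_std {p : ℕ} (i j : Fin p) (x : Fin p → ℝ) :
    x ⬝ᵥ (Matrix.single i j (1:ℝ) *ᵥ x) = x i * x j := by
  rw [Matrix.single_mulVec]
  simp [dotProduct, Function.update_apply, Finset.sum_ite_eq']

lemma sum_erase_update {p : ℕ} (f g : Fin p → Fin p → ℝ) (i j : Fin p) (hij : i ≠ j)
    (h : ∀ k l, k ≠ l → ¬(k = i ∧ l = j) → ¬(k = j ∧ l = i) → g k l = f k l) :
    ∑ k, ∑ l ∈ Finset.univ.erase k, g k l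
      = (∑ k, ∑ l ∈ Finset.univ.erase k, f k l) + (g i j - f i j) + (g j i - f j i) := by
  have hsplit : ∀ k, ∑ l ∈ Finset.univ.erase k, g k l
      = ∑ l ∈ Finset.univ.erase k, f k l + ∑ l ∈ Finset.univ.erase k, (g k l - f k l) := by
    intro k
    rw [← Finset.sum_add_distrib]
    exact Finset.sum_congr rfl (fun l _ => by ring)
  have hD : ∀ k l, l ∈ Finset.univ.erase k → ¬(k = i ∧ l = j) → ¬(k = j ∧ l = i) →
      g k l - f k l = 0 := by
    intro k l hl h1 h2
    rw [h k l (Ne.symm (Finset.ne_of_mem_erase hl)) h1 h2, sub_self]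
  have hDi : ∑ l ∈ Finset.univ.erase i, (g i l - f i l) = g i j - f i j := by
    refine Finset.sum_eq_single_of_mem j (Finset.mem_erase.2 ⟨hij.symm, Finset.mem_univ j⟩) ?_
    intro l hl hlj
    exact hD i l hl (fun hc => hlj hc.2) (fun hc => hij hc.1)
  have hDj : ∑ l ∈ Finset.univ.erase j, (g j l - f j l) = g j i - f j i := by
    refine Finset.sum_eq_single_of_mem i (Finset.mem_erase.2 ⟨hij, Finset.mem_univ i⟩) ?_
    intro l hl hli
    exact hD j l hl (fun hc => hij hc.1.symm) (fun hc => hli hc.2)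
  have hD0 : ∀ k, k ≠ i → k ≠ j → ∑ l ∈ Finset.univ.erase k, (g k l - f k l) = 0 := by
    intro k hki hkj
    refine Finset.sum_eq_zero (fun l hl => ?_)
    exact hD k l hl (fun hc => hki hc.1) (fun hc => hkj hc.1)
  have hsum2 : ∑ k, ∑ l ∈ Finset.univ.erase k, (g k l - f k l)
      = (g i j - f i j) + (g j i - f j i) := by
    have hsub : ∑ k ∈ ({i, j} : Finset (Fin p)), (∑ l ∈ Finset.univ.erase k, (g k l - f k l))
        = ∑ k : Fin p, ∑ l ∈ Finset.univ.erase k, (g k l - f k l) := by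
      refine Finset.sum_subset (Finset.subset_univ _) (fun k _ hk => ?_)
      simp only [Finset.mem_insert, Finset.mem_singleton] at hk
      push_neg at hk
      exact hD0 k hk.1 hk.2
    rw [← hsub, Finset.sum_pair hij, hDi, hDj]
  calc ∑ k, ∑ l ∈ Finset.univ.erase k, g k l
      = ∑ k, (∑ l ∈ Finset.univ.erase k, f k l + ∑ l ∈ Finset.univ.erase k, (g k l - f k l)) :=
        Finset.sum_congr rfl (fun k _ => hsplit k)
    _ = (∑ k, ∑ l ∈ Finset.univ.erase k, f k l)
        + ∑ k, ∑ l ∈ Finset.univ.erase k, (g k l - f k l) := Finset.sum_add_distrib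
    _ = (∑ k, ∑ l ∈ Finset.univ.erase k, f k l) + (g i j - f i j) + (g j i - f j i) := by
        rw [hsum2]; ring

lemma isSymm_isHermitian {p : ℕ} {M : Matrix (Fin p) (Fin p) ℝ} (h : M.IsSymm) :
    M.IsHermitian := by
  rw [Matrix.IsHermitian]
  ext k l
  rw [Matrix.conjTranspose_apply, star_trivial]
  exact h.apply k l

lemma posdef_perturb {p : ℕ} {Θ E : Matrix (Fin p) (Fin p) ℝ} {c : ℝ}
    (hΘsym : Θ.IsSymm) (hEsym : E.IsSymm) (hc : 0 < c)
    (hcoer : ∀ x, c * (x ⬝ᵥ x) ≤ x ⬝ᵥ (Θ *ᵥ x))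
    (hEq : ∀ x, |x ⬝ᵥ (E *ᵥ x)| ≤ 2 * (x ⬝ᵥ x)) {t : ℝ} (ht : |t| < c / 2) :
    (Θ + t • E).PosDef := by
  refine Matrix.PosDef.of_dotProduct_mulVec_pos (isSymm_isHermitian (hΘsym.add (hEsym.smul t))) (fun x hx => ?_)
  have hst : star x = x := by simp
  rw [hst]
  have hxx : 0 < x ⬝ᵥ x := by
    rcases lt_or_eq_of_le (Finset.sum_nonneg (fun m (_ : m ∈ Finset.univ) =>
      mul_self_nonneg (x m)) : (0:ℝ) ≤ x ⬝ᵥ x) with h | h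
    · exact h
    · exact absurd (dotProduct_self_eq_zero.1 h.symm) hx
  have hexp : x ⬝ᵥ ((Θ + t • E) *ᵥ x) = x ⬝ᵥ (Θ *ᵥ x) + t * (x ⬝ᵥ (E *ᵥ x)) := by
    rw [Matrix.add_mulVec, dotProduct_add, Matrix.smul_mulVec,
      dotProduct_smul, smul_eq_mul]
  rw [hexp]
  have h1 := hcoer x
  have h2 := hEq x
  have h3 : |t * (x ⬝ᵥ (E *ᵥ x))| ≤ |t| * (2 * (x ⬝ᵥ x)) := by
    rw [abs_mul]
    exact mul_le_mul_of_nonneg_left h2 (abs_nonneg t)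
  have h4 : |t| * (2 * (x ⬝ᵥ x)) < c * (x ⬝ᵥ x) := by nlinarith [abs_nonneg t]
  have h5 := neg_abs_le (t * (x ⬝ᵥ (E *ᵥ x)))
  linarith

/-- The graphical lasso objective `log det Θ − tr(SΘ) − λ Σ_{i≠j} |Θ_{ij}|`
(diagonal unpenalized). -/
noncomputable def glassoObj {p : ℕ} (S : Matrix (Fin p) (Fin p) ℝ) (lam : ℝ)
    (Theta : Matrix (Fin p) (Fin p) ℝ) : ℝ :=
  Real.log Theta.det - (S * Theta).trace -
    lam * ∑ i, ∑ j ∈ Finset.univ.erase i, |Theta i j|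

/-- Graphical lasso subgradient bound: if `Θ̂` maximizes the penalized log-likelihood
over symmetric positive definite matrices and `Σ̂ = Θ̂⁻¹`, then `Σ̂_{ii} = S_{ii}`,
`|Σ̂_{ij} − S_{ij}| ≤ λ` for `i ≠ j`, and `Σ̂_{ij} − S_{ij} = λ·sign(Θ̂_{ij})` whenever
`Θ̂_{ij} ≠ 0`. -/
theorem graphical_lasso_subgradient {p : ℕ} (S : Matrix (Fin p) (Fin p) ℝ)
    (hS : S.IsSymm) (lam : ℝ) (hlam : 0 < lam)
    (That : Matrix (Fin p) (Fin p) ℝ) (hsymm : That.IsSymm) (hpd : That.PosDef)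
    (hmax : ∀ Theta : Matrix (Fin p) (Fin p) ℝ, Theta.IsSymm → Theta.PosDef →
      glassoObj S lam Theta ≤ glassoObj S lam That) :
    (∀ i : Fin p, That⁻¹ i i = S i i) ∧
    (∀ i j : Fin p, i ≠ j →
      |That⁻¹ i j - S i j| ≤ lam ∧
      (That i j ≠ 0 → That⁻¹ i j - S i j = lam * Real.sign (That i j))) := by
  classical
  have hdetpos := hpd.det_pos
  have hdet : IsUnit That.det := hdetpos.ne'.isUnit
  have hSigsymm : (That⁻¹).IsSymm := by
    rw [Matrix.IsSymm, Matrix.transpose_nonsing_inv, hsymm.eq]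
  rcases Nat.eq_zero_or_pos p with hp | hp
  · subst hp
    exact ⟨fun i => i.elim0, fun i => i.elim0⟩
  obtain ⟨c, hc, hcoer⟩ := posdef_coercive hpd hsymm hp
  constructor
  · -- diagonal part
    intro i
    set E : Matrix (Fin p) (Fin p) ℝ := Matrix.single i i 1 with hE
    have hEsym : E.IsSymm := std_diag_symm i
    have hEq : ∀ x : Fin p → ℝ, |x ⬝ᵥ (E *ᵥ x)| ≤ 2 * (x ⬝ᵥ x) := by
      intro x
      rw [hE, quad_std]
      have h1 := abs_entry_mul_le_dot x i i
      have hxx : (0:ℝ) ≤ x ⬝ᵥ x := Finset.sum_nonneg (fun m _ => mul_self_nonneg (x m))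
      linarith
    have hPD : ∀ t : ℝ, |t| < c / 2 → (That + t • E).PosDef :=
      fun t ht => posdef_perturb hsymm hEsym hc hcoer hEq ht
    have hobj : ∀ t : ℝ, |t| < c / 2 →
        glassoObj S lam (That + t • E)
          = glassoObj S lam That + (Real.log (1 + t * That⁻¹ i i) - t * S i i) := by
      intro t ht
      have hdet2 : (That + t • E).det = That.det * (1 + t * That⁻¹ i i) :=
        det_add_smul_single That hdet i t
      have hdpos : 0 < (That + t • E).det := (hPD t ht).det_pos
      have hq : 0 < 1 + t * That⁻¹ i i := by
        rw [hdet2] at hdpos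
        nlinarith [hdetpos, hdpos]
      have htr : (S * (That + t • E)).trace = (S * That).trace + t * S i i := by
        rw [Matrix.mul_add, Matrix.trace_add, Matrix.mul_smul, Matrix.trace_smul, hE,
          trace_mul_std]
        simp
      have hpen : ∑ k, ∑ l ∈ Finset.univ.erase k, |(That + t • E) k l|
          = ∑ k, ∑ l ∈ Finset.univ.erase k, |That k l| := by
        refine Finset.sum_congr rfl (fun k _ => Finset.sum_congr rfl (fun l hl => ?_))
        have hlk : l ≠ k := Finset.ne_of_mem_erase hl
        have hE0 : E k l = 0 := by
          rw [hE]
          exact Matrix.single_apply_of_ne i i 1 k l (fun hc => hlk (hc.2.symm.trans hc.1))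
        simp [Matrix.add_apply, Matrix.smul_apply, hE0]
      simp only [glassoObj]
      rw [hdet2, Real.log_mul hdetpos.ne' hq.ne', htr, hpen]
      ring
    have hloc : IsLocalMax (fun t : ℝ => Real.log (1 + t * That⁻¹ i i) - t * S i i) 0 := by
      have hev : ∀ᶠ t : ℝ in nhds 0, |t| < c / 2 := by
        simpa using eventually_abs_sub_lt (0:ℝ) (half_pos hc)
      filter_upwards [hev] with t ht
      have h1 := hmax (That + t • E) (hsymm.add (hEsym.smul t)) (hPD t ht)
      rw [hobj t ht] at h1
      simp only [zero_mul, mul_zero, add_zero, zero_add, Real.log_one]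
      linarith
    have hder : HasDerivAt (fun t : ℝ => Real.log (1 + t * That⁻¹ i i) - t * S i i)
        (That⁻¹ i i - S i i) 0 := by
      have h1 : HasDerivAt (fun t : ℝ => 1 + t * That⁻¹ i i) (That⁻¹ i i) 0 := by
        simpa using ((hasDerivAt_id (0:ℝ)).mul_const (That⁻¹ i i)).const_add 1
      have h2 := h1.log (by norm_num : (1:ℝ) + 0 * That⁻¹ i i ≠ 0)
      have h3 : HasDerivAt (fun t : ℝ => t * S i i) (S i i) 0 := by
        simpa using (hasDerivAt_id (0:ℝ)).mul_const (S i i)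
      have h4 := h2.sub h3
      exact h4.congr_deriv (by simp)
    have hzero := hloc.hasDerivAt_eq_zero hder
    linarith
  · -- off-diagonal part
    intro i j hij
    set E : Matrix (Fin p) (Fin p) ℝ := Matrix.single i j 1 + Matrix.single j i 1 with hE
    have hEsym : E.IsSymm := std_pair_symm i j
    have hEq : ∀ x : Fin p → ℝ, |x ⬝ᵥ (E *ᵥ x)| ≤ 2 * (x ⬝ᵥ x) := by
      intro x
      have hquadE : x ⬝ᵥ (E *ᵥ x) = x i * x j + x j * x i := by
        rw [hE, Matrix.add_mulVec, dotProduct_add, quad_std, quad_std]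
      rw [hquadE]
      have h1 := abs_entry_mul_le_dot x i j
      have h2 := abs_entry_mul_le_dot x j i
      calc |x i * x j + x j * x i| ≤ |x i * x j| + |x j * x i| := abs_add_le _ _
        _ ≤ 2 * (x ⬝ᵥ x) := by linarith
    have hPD : ∀ t : ℝ, |t| < c / 2 → (That + t • E).PosDef :=
      fun t ht => posdef_perturb hsymm hEsym hc hcoer hEq ht
    have hji : That⁻¹ j i = That⁻¹ i j := hSigsymm.apply i j
    have hθji : That j i = That i j := hsymm.apply i j
    have hSji : S j i = S i j := hS.apply i j
    -- objective identity
    have hobj : ∀ t : ℝ, |t| < c / 2 →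
        glassoObj S lam (That + t • E) = glassoObj S lam That
          + (Real.log ((1 + t * That⁻¹ j i) * (1 + t * That⁻¹ i j)
              - (t * That⁻¹ j j) * (t * That⁻¹ i i))
            - t * (2 * S i j) - lam * (2 * (|That i j + t| - |That i j|))) := by
      intro t ht
      have hdet2 : (That + t • E).det = That.det
          * ((1 + t * That⁻¹ j i) * (1 + t * That⁻¹ i j)
            - (t * That⁻¹ j j) * (t * That⁻¹ i i)) := by
        rw [hE]; exact det_add_smul_pair That hdet i j t
      have hdpos : 0 < (That + t • E).det := (hPD t ht).det_pos
      have hq : 0 < (1 + t * That⁻¹ j i) * (1 + t * That⁻¹ i j)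
          - (t * That⁻¹ j j) * (t * That⁻¹ i i) := by
        rw [hdet2] at hdpos
        nlinarith [hdetpos, hdpos]
      have htr : (S * (That + t • E)).trace = (S * That).trace + t * (2 * S i j) := by
        rw [Matrix.mul_add, Matrix.trace_add, Matrix.mul_smul, Matrix.trace_smul, hE,
          Matrix.mul_add, Matrix.trace_add, trace_mul_std, trace_mul_std, hSji]
        rw [smul_eq_mul]
        ring
      have hEij : E i j = 1 := by
        rw [hE, Matrix.add_apply, Matrix.single_apply_same,
          Matrix.single_apply_of_ne j i 1 i j (fun hc => hij hc.1.symm), add_zero]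
      have hEji : E j i = 1 := by
        rw [hE, Matrix.add_apply, Matrix.single_apply_same,
          Matrix.single_apply_of_ne i j 1 j i (fun hc => hij hc.1), zero_add]
      have hgij : (That + t • E) i j = That i j + t := by
        simp [Matrix.add_apply, Matrix.smul_apply, hEij]
      have hgji : (That + t • E) j i = That j i + t := by
        simp [Matrix.add_apply, Matrix.smul_apply, hEji]
      have hcond : ∀ k l, k ≠ l → ¬(k = i ∧ l = j) → ¬(k = j ∧ l = i) →
          |(That + t • E) k l| = |That k l| := by
        intro k l hkl h1 h2
        have hE0 : E k l = 0 := by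
          rw [hE, Matrix.add_apply,
            Matrix.single_apply_of_ne i j 1 k l (fun hc => h1 ⟨hc.1.symm, hc.2.symm⟩),
            Matrix.single_apply_of_ne j i 1 k l (fun hc => h2 ⟨hc.1.symm, hc.2.symm⟩), add_zero]
        simp [Matrix.add_apply, Matrix.smul_apply, hE0]
      have hpen : ∑ k, ∑ l ∈ Finset.univ.erase k, |(That + t • E) k l|
          = (∑ k, ∑ l ∈ Finset.univ.erase k, |That k l|)
            + (|That i j + t| - |That i j|) + (|That i j + t| - |That i j|) := by
        have := sum_erase_update (fun k l => |That k l|)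
          (fun k l => |(That + t • E) k l|) i j hij hcond
        rw [this]
        simp only [hgij, hgji, hθji]
      simp only [glassoObj]
      rw [hdet2, Real.log_mul hdetpos.ne' hq.ne', htr, hpen]
      ring
    -- derivative of the smooth part
    have hQder : HasDerivAt (fun t : ℝ => (1 + t * That⁻¹ j i) * (1 + t * That⁻¹ i j)
        - (t * That⁻¹ j j) * (t * That⁻¹ i i)) (That⁻¹ j i + That⁻¹ i j) 0 := by
      have h1 : HasDerivAt (fun t : ℝ => 1 + t * That⁻¹ j i) (That⁻¹ j i) 0 := by
        simpa using ((hasDerivAt_id (0:ℝ)).mul_const (That⁻¹ j i)).const_add 1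
      have h2 : HasDerivAt (fun t : ℝ => 1 + t * That⁻¹ i j) (That⁻¹ i j) 0 := by
        simpa using ((hasDerivAt_id (0:ℝ)).mul_const (That⁻¹ i j)).const_add 1
      have h3 : HasDerivAt (fun t : ℝ => t * That⁻¹ j j) (That⁻¹ j j) 0 := by
        simpa using (hasDerivAt_id (0:ℝ)).mul_const (That⁻¹ j j)
      have h4 : HasDerivAt (fun t : ℝ => t * That⁻¹ i i) (That⁻¹ i i) 0 := by
        simpa using (hasDerivAt_id (0:ℝ)).mul_const (That⁻¹ i i)
      have h12 := h1.mul h2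
      have h34 := h3.mul h4
      have h5 := h12.sub h34
      exact h5.congr_deriv (by norm_num)
    have hQ0 : ((1:ℝ) + 0 * That⁻¹ j i) * (1 + 0 * That⁻¹ i j)
        - (0 * That⁻¹ j j) * (0 * That⁻¹ i i) ≠ 0 := by norm_num
    have hφder : HasDerivAt (fun t : ℝ => Real.log ((1 + t * That⁻¹ j i)
        * (1 + t * That⁻¹ i j) - (t * That⁻¹ j j) * (t * That⁻¹ i i)) - t * (2 * S i j))
        (2 * That⁻¹ i j - 2 * S i j) 0 := by
      have hlog := hQder.log hQ0
      have hlin : HasDerivAt (fun t : ℝ => t * (2 * S i j)) (2 * S i j) 0 := by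
        simpa using (hasDerivAt_id (0:ℝ)).mul_const (2 * S i j)
      have := hlog.sub hlin
      have heq : (That⁻¹ j i + That⁻¹ i j) / (((1:ℝ) + 0 * That⁻¹ j i) * (1 + 0 * That⁻¹ i j)
          - (0 * That⁻¹ j j) * (0 * That⁻¹ i i)) - 2 * S i j
          = 2 * That⁻¹ i j - 2 * S i j := by
        rw [hji]; norm_num; ring
      rw [heq] at this
      exact this
    -- the local-max inequality on a neighborhood
    have hineq : ∀ᶠ t : ℝ in nhds 0,
        Real.log ((1 + t * That⁻¹ j i) * (1 + t * That⁻¹ i j)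
          - (t * That⁻¹ j j) * (t * That⁻¹ i i)) - t * (2 * S i j)
          ≤ lam * (2 * (|That i j + t| - |That i j|)) := by
      have hev : ∀ᶠ t : ℝ in nhds 0, |t| < c / 2 := by
        simpa using eventually_abs_sub_lt (0:ℝ) (half_pos hc)
      filter_upwards [hev] with t ht
      have h1 := hmax (That + t • E) (hsymm.add (hEsym.smul t)) (hPD t ht)
      rw [hobj t ht] at h1
      linarith
    constructor
    · -- |Σ̂_ij - S_ij| ≤ lam
      have habsd : ∀ t : ℝ, |That i j + t| - |That i j| ≤ |t| := by
        intro t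
        have := abs_sub_abs_le_abs_sub (That i j + t) (That i j)
        simpa using this
      have hub : That⁻¹ i j - S i j ≤ lam := by
        have hψ : HasDerivAt (fun t : ℝ => Real.log ((1 + t * That⁻¹ j i)
            * (1 + t * That⁻¹ i j) - (t * That⁻¹ j j) * (t * That⁻¹ i i))
            - t * (2 * S i j) - t * (2 * lam)) (2 * That⁻¹ i j - 2 * S i j - 2 * lam) 0 := by
          have hlin : HasDerivAt (fun t : ℝ => t * (2 * lam)) (2 * lam) 0 := by
            simpa using (hasDerivAt_id (0:ℝ)).mul_const (2 * lam)
          exact hφder.sub hlin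
        have hψ0 : (fun t : ℝ => Real.log ((1 + t * That⁻¹ j i)
            * (1 + t * That⁻¹ i j) - (t * That⁻¹ j j) * (t * That⁻¹ i i))
            - t * (2 * S i j) - t * (2 * lam)) 0 = 0 := by norm_num
        have hd := deriv_nonpos_of_right hψ hψ0 ?_
        · linarith
        · filter_upwards [hineq.filter_mono nhdsWithin_le_nhds, self_mem_nhdsWithin]
            with t h1 h2
          have h3 : |That i j + t| - |That i j| ≤ t := by
            have := habsd t
            rw [abs_of_pos (Set.mem_Ioi.1 h2)] at this
            exact this
          nlinarith [hlam]
      have hlb : -lam ≤ That⁻¹ i j - S i j := by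
        have hψ : HasDerivAt (fun t : ℝ => Real.log ((1 + t * That⁻¹ j i)
            * (1 + t * That⁻¹ i j) - (t * That⁻¹ j j) * (t * That⁻¹ i i))
            - t * (2 * S i j) + t * (2 * lam)) (2 * That⁻¹ i j - 2 * S i j + 2 * lam) 0 := by
          have hlin : HasDerivAt (fun t : ℝ => t * (2 * lam)) (2 * lam) 0 := by
            simpa using (hasDerivAt_id (0:ℝ)).mul_const (2 * lam)
          exact hφder.add hlin
        have hψ0 : (fun t : ℝ => Real.log ((1 + t * That⁻¹ j i)
            * (1 + t * That⁻¹ i j) - (t * That⁻¹ j j) * (t * That⁻¹ i i))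
            - t * (2 * S i j) + t * (2 * lam)) 0 = 0 := by norm_num
        have hd := deriv_nonneg_of_left hψ hψ0 ?_
        · linarith
        · filter_upwards [hineq.filter_mono nhdsWithin_le_nhds, self_mem_nhdsWithin]
            with t h1 h2
          have h3 : |That i j + t| - |That i j| ≤ -t := by
            have := habsd t
            rw [abs_of_neg (Set.mem_Iio.1 h2)] at this
            exact this
          nlinarith [hlam]
      exact abs_le.2 ⟨hlb, hub⟩
    · -- sign condition
      intro hθ
      have habs : ∀ t : ℝ, |t| < |That i j| →
          |That i j + t| - |That i j| = Real.sign (That i j) * t := by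
        intro t ht
        rcases lt_trichotomy (That i j) 0 with hneg | hzero | hpos
        · have hs : Real.sign (That i j) = -1 := Real.sign_of_neg hneg
          have h1 : That i j + t < 0 := by
            have := abs_lt.1 ht
            rw [abs_of_neg hneg] at this
            linarith [this.2]
          rw [abs_of_neg h1, abs_of_neg hneg, hs]; ring
        · exact absurd hzero hθ
        · have hs : Real.sign (That i j) = 1 := Real.sign_of_pos hpos
          have h1 : 0 < That i j + t := by
            have := abs_lt.1 ht
            rw [abs_of_pos hpos] at this
            linarith [this.1]
          rw [abs_of_pos h1, abs_of_pos hpos, hs]; ring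
      have hloc : IsLocalMax (fun t : ℝ => Real.log ((1 + t * That⁻¹ j i)
          * (1 + t * That⁻¹ i j) - (t * That⁻¹ j j) * (t * That⁻¹ i i))
          - t * (2 * S i j) - t * (2 * lam * Real.sign (That i j))) 0 := by
        filter_upwards [hineq, eventually_abs_sub_lt (0:ℝ) (abs_pos.2 hθ)] with t h1 h2
        rw [sub_zero] at h2
        have h3 := habs t h2
        simp only [zero_mul, mul_zero, add_zero, sub_zero]
        norm_num
        nlinarith [h1, h3]
      have hder : HasDerivAt (fun t : ℝ => Real.log ((1 + t * That⁻¹ j i)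
          * (1 + t * That⁻¹ i j) - (t * That⁻¹ j j) * (t * That⁻¹ i i))
          - t * (2 * S i j) - t * (2 * lam * Real.sign (That i j)))
          (2 * That⁻¹ i j - 2 * S i j - 2 * lam * Real.sign (That i j)) 0 := by
        have hlin : HasDerivAt (fun t : ℝ => t * (2 * lam * Real.sign (That i j)))
            (2 * lam * Real.sign (That i j)) 0 := by
          simpa using (hasDerivAt_id (0:ℝ)).mul_const (2 * lam * Real.sign (That i j))
        exact hφder.sub hlin
      have hzero := hloc.hasDerivAt_eq_zero hder
      linarith
end
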